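/- arXiv:2202.00954 — 4 statements merged into one kernel-verified Lean document; each statement's English description precedes it below -/
import Mathlib

section
/- Let π̂ be an optimal plan minimizing Φ over Π(μ¹,…,μ^N), and let ν̂ be an optimal barycenter, i.e. a minimizer of Ψ over probability measures on ℝ^d. Then Φ(π̂) = Ψ(ν̂). -/
open MeasureTheory
open scoped ENNReal

noncomputable section

/-- Points of the `d`-dimensional Euclidean space. -/
abbrev Pt (d : ℕ) := EuclideanSpace ℝ (Fin d)

/-- A measure is finitely supported if it vanishes outside a finite set. -/
def FinitelySupported {α : Type*} [MeasurableSpace α] (μ : Measure α) : Prop :=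
  ∃ s : Finset α, μ ((s : Set α)ᶜ) = 0

/-- `λ` lies in the open probability simplex. -/
def InSimplex {N : ℕ} (l : Fin N → ℝ) : Prop :=
  (∀ i, 0 < l i) ∧ ∑ i, l i = 1

/-- `π` is a multi-marginal transport plan with marginals `μ i`. -/
def IsPlan {d N : ℕ} (μ : Fin N → Measure (Pt d)) (π : Measure (Fin N → Pt d)) : Prop :=
  IsProbabilityMeasure π ∧ ∀ i, π.map (fun x => x i) = μ i

/-- The multi-marginal optimal transport cost `Φ(π)`. -/
def MOT {d N : ℕ} (l : Fin N → ℝ) (π : Measure (Fin N → Pt d)) : ℝ≥0∞ :=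
  ∫⁻ x, ∑ s : Fin N, ∑ t : Fin N,
    (if s < t then ENNReal.ofReal (l s * l t * ‖x s - x t‖ ^ 2) else 0) ∂π

/-- `π` is a coupling of `μ` and `ν`. -/
def IsCoupling {α : Type*} [MeasurableSpace α] (μ ν : Measure α) (π : Measure (α × α)) : Prop :=
  IsProbabilityMeasure π ∧ π.map Prod.fst = μ ∧ π.map Prod.snd = ν

/-- The squared Wasserstein-2 distance: the optimal squared-Euclidean transport cost
over all couplings. -/
def W2sq {d : ℕ} (μ ν : Measure (Pt d)) : ℝ≥0∞ :=
  sInf { c : ℝ≥0∞ | ∃ π : Measure (Pt d × Pt d), IsCoupling μ ν π ∧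
    c = ∫⁻ p, ENNReal.ofReal (‖p.1 - p.2‖ ^ 2) ∂π }

/-- The barycenter objective `Ψ(ν) = ∑ i λ i * W₂²(μ i, ν)`. -/
def Psi {d N : ℕ} (l : Fin N → ℝ) (μ : Fin N → Measure (Pt d)) (ν : Measure (Pt d)) : ℝ≥0∞ :=
  ∑ i, ENNReal.ofReal (l i) * W2sq (μ i) ν

/-- The `λ`-weighted mean map `M_λ`. -/
def wmean {d N : ℕ} (l : Fin N → ℝ) (x : Fin N → Pt d) : Pt d :=
  ∑ i, l i • x i

/-- The support-as-atoms of a measure. -/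
def msupport {α : Type*} [MeasurableSpace α] (μ : Measure α) : Set α :=
  {x | μ {x} ≠ 0}

section Aux

open scoped RealInnerProductSpace

lemma pair_sum_eq {E : Type*} [NormedAddCommGroup E] [InnerProductSpace ℝ E]
    {N : ℕ} (l : Fin N → ℝ) (hsum : ∑ i, l i = 1) (x : Fin N → E) :
    ∑ s : Fin N, ∑ t : Fin N, (if s < t then l s * l t * ‖x s - x t‖ ^ 2 else 0)
      = ∑ i, l i * ‖x i - ∑ j, l j • x j‖ ^ 2 := by
  set M : E := ∑ j, l j • x j with hM
  have key : ∀ a b : E, ‖a - b‖ ^ 2 = ‖a‖^2 - 2 * ⟪a, b⟫ + ‖b‖^2 := by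
    intro a b
    rw [← real_inner_self_eq_norm_sq, ← real_inner_self_eq_norm_sq, ← real_inner_self_eq_norm_sq,
      inner_sub_sub_self, real_inner_comm b a]
    ring
  have hMin : ∀ a : E, ⟪a, M⟫ = ∑ j, l j * ⟪a, x j⟫ := by
    intro a; rw [hM, inner_sum]; exact Finset.sum_congr rfl fun j _ => real_inner_smul_right _ _ _
  have hMM : ⟪M, M⟫ = ∑ i, ∑ j, l i * l j * ⟪x i, x j⟫ := by
    rw [hM, sum_inner]
    refine Finset.sum_congr rfl fun i _ => ?_
    rw [real_inner_smul_left, hMin, Finset.mul_sum]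
    exact Finset.sum_congr rfl fun j _ => by ring
  have h2 : ∑ i, l i * ⟪x i, M⟫ = ⟪M, M⟫ := by
    rw [hM, sum_inner]
    exact Finset.sum_congr rfl fun i _ => (real_inner_smul_left _ _ _).symm
  have hRHS : ∑ i, l i * ‖x i - M‖ ^ 2 = ∑ i, l i * ‖x i‖^2 - ⟪M, M⟫ := by
    have hpt : ∀ i : Fin N, l i * ‖x i - M‖ ^ 2
        = l i * ‖x i‖^2 - 2 * (l i * ⟪x i, M⟫) + l i * ‖M‖^2 := by
      intro i; rw [key]; ring
    rw [Finset.sum_congr rfl fun i _ => hpt i, Finset.sum_add_distrib, Finset.sum_sub_distrib,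
      ← Finset.mul_sum, h2, ← Finset.sum_mul, hsum, real_inner_self_eq_norm_sq]
    ring
  set c : Fin N → Fin N → ℝ := fun s t => l s * l t * ‖x s - x t‖ ^ 2 with hc
  have hcsymm : ∀ s t, c s t = c t s := by
    intro s t; rw [hc]; dsimp only; rw [norm_sub_rev]; ring
  have hsplit : ∀ s t : Fin N, c s t
      = (if s < t then c s t else 0) + (if t < s then c s t else 0) := by
    intro s t
    rcases lt_trichotomy s t with h | h | h
    · simp [h, asymm h]
    · subst h; simp [hc, lt_irrefl]
    · simp [h, asymm h]
  have hdouble : ∑ s : Fin N, ∑ t : Fin N, c s t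
      = 2 * ∑ s : Fin N, ∑ t : Fin N, (if s < t then c s t else 0) := by
    calc ∑ s : Fin N, ∑ t : Fin N, c s t
        = ∑ s : Fin N, ∑ t : Fin N,
            ((if s < t then c s t else 0) + (if t < s then c s t else 0)) :=
          Finset.sum_congr rfl fun s _ => Finset.sum_congr rfl fun t _ => hsplit s t
      _ = (∑ s : Fin N, ∑ t : Fin N, (if s < t then c s t else 0))
          + ∑ s : Fin N, ∑ t : Fin N, (if t < s then c s t else 0) := by
          rw [Finset.sum_congr rfl fun s _ => Finset.sum_add_distrib, Finset.sum_add_distrib]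
      _ = 2 * ∑ s : Fin N, ∑ t : Fin N, (if s < t then c s t else 0) := by
          have : ∑ s : Fin N, ∑ t : Fin N, (if t < s then c s t else 0)
              = ∑ s : Fin N, ∑ t : Fin N, (if s < t then c s t else 0) := by
            rw [Finset.sum_comm]
            exact Finset.sum_congr rfl fun s _ => Finset.sum_congr rfl fun t _ => by
              rw [hcsymm s t]
          rw [this]; ring
  have hLHS2 : ∑ s : Fin N, ∑ t : Fin N, c s t = 2 * (∑ i, l i * ‖x i‖^2 - ⟪M, M⟫) := by
    have hpt : ∀ s t : Fin N, c s t
        = (l s * ‖x s‖^2) * l t + l s * (l t * ‖x t‖^2) - 2 * (l s * l t * ⟪x s, x t⟫) := by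
      intro s t; rw [hc]; dsimp only; rw [key]; ring
    have e1 : ∑ s : Fin N, ∑ t : Fin N, (l s * ‖x s‖^2) * l t = ∑ i, l i * ‖x i‖^2 := by
      refine Finset.sum_congr rfl fun s _ => ?_
      rw [← Finset.mul_sum, hsum, mul_one]
    have e2 : ∑ s : Fin N, ∑ t : Fin N, l s * (l t * ‖x t‖^2) = ∑ i, l i * ‖x i‖^2 := by
      rw [Finset.sum_comm]
      refine Finset.sum_congr rfl fun t _ => ?_
      rw [← Finset.sum_mul, hsum, one_mul]
    have e3 : ∑ s : Fin N, ∑ t : Fin N, 2 * (l s * l t * ⟪x s, x t⟫) = 2 * ⟪M, M⟫ := by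
      rw [hMM, Finset.mul_sum]
      exact Finset.sum_congr rfl fun s _ => by rw [Finset.mul_sum]
    calc ∑ s : Fin N, ∑ t : Fin N, c s t
        = ∑ s : Fin N, ∑ t : Fin N, ((l s * ‖x s‖^2) * l t + l s * (l t * ‖x t‖^2)
            - 2 * (l s * l t * ⟪x s, x t⟫)) :=
          Finset.sum_congr rfl fun s _ => Finset.sum_congr rfl fun t _ => hpt s t
      _ = 2 * (∑ i, l i * ‖x i‖^2 - ⟪M, M⟫) := by
          simp only [Finset.sum_add_distrib, Finset.sum_sub_distrib]
          rw [e1, e2, e3]; ring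
  have := hdouble.symm.trans hLHS2
  rw [hRHS]
  linarith

lemma mean_min {E : Type*} [NormedAddCommGroup E] [InnerProductSpace ℝ E]
    {N : ℕ} (l : Fin N → ℝ) (hpos : ∀ i, 0 ≤ l i) (hsum : ∑ i, l i = 1)
    (x : Fin N → E) (y : E) :
    ∑ i, l i * ‖x i - ∑ j, l j • x j‖ ^ 2 ≤ ∑ i, l i * ‖x i - y‖ ^ 2 := by
  set M : E := ∑ j, l j • x j with hM
  have hexp : ∀ i : Fin N, l i * ‖x i - y‖^2
      = l i * ‖x i - M‖^2 + 2 * (l i * ⟪x i - M, M - y⟫) + l i * ‖M - y‖^2 := by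
    intro i
    have hd : x i - y = (x i - M) + (M - y) := by abel
    rw [hd, ← real_inner_self_eq_norm_sq, inner_add_add_self,
      real_inner_comm (M - y) (x i - M), real_inner_self_eq_norm_sq, real_inner_self_eq_norm_sq]
    ring
  have hzero : ∑ i, l i • (x i - M) = (0 : E) := by
    simp only [smul_sub, Finset.sum_sub_distrib, ← hM, ← Finset.sum_smul, hsum, one_smul,
      sub_self]
  have hcross : ∑ i, l i * ⟪x i - M, M - y⟫ = 0 := by
    have h : ∑ i, l i * ⟪x i - M, M - y⟫ = ⟪∑ i, l i • (x i - M), M - y⟫ := by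
      rw [sum_inner]
      exact Finset.sum_congr rfl fun i _ => (real_inner_smul_left _ _ _).symm
    rw [h, hzero, inner_zero_left]
  have : ∑ i, l i * ‖x i - y‖ ^ 2
      = ∑ i, l i * ‖x i - M‖ ^ 2 + ‖M - y‖^2 := by
    rw [Finset.sum_congr rfl fun i _ => hexp i, Finset.sum_add_distrib, Finset.sum_add_distrib,
      ← Finset.mul_sum, hcross, ← Finset.sum_mul, hsum]
    ring
  rw [this]
  exact le_add_of_nonneg_right (by positivity)

lemma measurable_wmean {d N : ℕ} (l : Fin N → ℝ) : Measurable (wmean (d := d) l) :=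
  Finset.measurable_sum _ fun i _ => (measurable_pi_apply i).const_smul (l i)

lemma mot_integrand_eq {d N : ℕ} (l : Fin N → ℝ) (hl : InSimplex l) (x : Fin N → Pt d) :
    ∑ s : Fin N, ∑ t : Fin N,
      (if s < t then ENNReal.ofReal (l s * l t * ‖x s - x t‖ ^ 2) else 0)
    = ∑ i, ENNReal.ofReal (l i) * ENNReal.ofReal (‖x i - wmean l x‖ ^ 2) := by
  have hnn : ∀ s t : Fin N, 0 ≤ (if s < t then l s * l t * ‖x s - x t‖ ^ 2 else 0) := by
    intro s t; split
    · exact mul_nonneg (mul_nonneg (hl.1 s).le (hl.1 t).le) (sq_nonneg _)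
    · exact le_refl 0
  have h1 : ∀ s t : Fin N,
      (if s < t then ENNReal.ofReal (l s * l t * ‖x s - x t‖ ^ 2) else 0)
      = ENNReal.ofReal (if s < t then l s * l t * ‖x s - x t‖ ^ 2 else 0) := by
    intro s t; split <;> simp
  calc ∑ s : Fin N, ∑ t : Fin N,
      (if s < t then ENNReal.ofReal (l s * l t * ‖x s - x t‖ ^ 2) else 0)
      = ENNReal.ofReal (∑ s : Fin N, ∑ t : Fin N,
          (if s < t then l s * l t * ‖x s - x t‖ ^ 2 else 0)) := by
        rw [ENNReal.ofReal_sum_of_nonneg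
          (fun s _ => Finset.sum_nonneg fun t _ => hnn s t)]
        refine Finset.sum_congr rfl fun s _ => ?_
        rw [ENNReal.ofReal_sum_of_nonneg (fun t _ => hnn s t)]
        exact Finset.sum_congr rfl fun t _ => h1 s t
    _ = ∑ i, ENNReal.ofReal (l i) * ENNReal.ofReal (‖x i - wmean l x‖ ^ 2) := by
        rw [pair_sum_eq l hl.2, ENNReal.ofReal_sum_of_nonneg
          (fun i _ => mul_nonneg (hl.1 i).le (sq_nonneg _))]
        exact Finset.sum_congr rfl fun i _ => ENNReal.ofReal_mul (hl.1 i).le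

lemma mot_integrand_le {d N : ℕ} (l : Fin N → ℝ) (hl : InSimplex l) (x : Fin N → Pt d)
    (y : Pt d) :
    ∑ s : Fin N, ∑ t : Fin N,
      (if s < t then ENNReal.ofReal (l s * l t * ‖x s - x t‖ ^ 2) else 0)
    ≤ ∑ i, ENNReal.ofReal (l i) * ENNReal.ofReal (‖x i - y‖ ^ 2) := by
  rw [mot_integrand_eq l hl x]
  have h1 : ∑ i, ENNReal.ofReal (l i) * ENNReal.ofReal (‖x i - wmean l x‖ ^ 2)
      = ENNReal.ofReal (∑ i, l i * ‖x i - wmean l x‖ ^ 2) := by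
    rw [ENNReal.ofReal_sum_of_nonneg (fun i _ => mul_nonneg (hl.1 i).le (sq_nonneg _))]
    exact Finset.sum_congr rfl fun i _ => (ENNReal.ofReal_mul (hl.1 i).le).symm
  have h2 : ∑ i, ENNReal.ofReal (l i) * ENNReal.ofReal (‖x i - y‖ ^ 2)
      = ENNReal.ofReal (∑ i, l i * ‖x i - y‖ ^ 2) := by
    rw [ENNReal.ofReal_sum_of_nonneg (fun i _ => mul_nonneg (hl.1 i).le (sq_nonneg _))]
    exact Finset.sum_congr rfl fun i _ => (ENNReal.ofReal_mul (hl.1 i).le).symm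
  rw [h1, h2]
  exact ENNReal.ofReal_le_ofReal (mean_min l (fun i => (hl.1 i).le) hl.2 x y)

lemma rnDeriv_finset_sum {α : Type*} [MeasurableSpace α] {ι : Type*} [DecidableEq ι]
    (s : Finset ι) (m : ι → Measure α) (ν : Measure α) [∀ i, IsFiniteMeasure (m i)]
    [SigmaFinite ν] :
    (∑ i ∈ s, m i).rnDeriv ν =ᵐ[ν] fun y => ∑ i ∈ s, (m i).rnDeriv ν y := by
  classical
  induction s using Finset.induction_on with
  | empty =>
    simp only [Finset.sum_empty]
    filter_upwards [Measure.rnDeriv_zero ν] with y hy using hy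
  | insert _ _ hnotmem ih =>
    rename_i a s
    rw [Finset.sum_insert hnotmem]
    have h1 := Measure.rnDeriv_add' (m a) (∑ i ∈ s, m i) ν
    filter_upwards [h1, ih] with y hy1 hy2
    rw [hy1, Pi.add_apply, hy2, Finset.sum_insert hnotmem]

lemma MOT_le_psi {d N : ℕ} (μ : Fin N → Measure (Pt d))
    (hμ : ∀ i, IsProbabilityMeasure (μ i) ∧ FinitelySupported (μ i))
    (l : Fin N → ℝ) (hl : InSimplex l)
    (pihat : Measure (Fin N → Pt d)) (hπopt : ∀ π, IsPlan μ π → MOT l pihat ≤ MOT l π)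
    (nuhat : Measure (Pt d)) (hν : IsProbabilityMeasure nuhat) :
    MOT l pihat ≤ Psi l μ nuhat := by
  classical
  refine ENNReal.le_of_forall_pos_le_add fun ε hε hfin => ?_
  -- each W2sq is finite
  have hWfin : ∀ i, W2sq (μ i) nuhat ≠ ∞ := by
    intro i
    intro htop
    have hterm : ENNReal.ofReal (l i) * W2sq (μ i) nuhat < ∞ :=
      ENNReal.sum_lt_top.1 hfin i (Finset.mem_univ i)
    rw [htop, ENNReal.mul_top (by simp [ENNReal.ofReal_eq_zero, not_le.mpr (hl.1 i)])] at hterm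
    exact (lt_irrefl _ hterm).elim
  -- choose near-optimal couplings
  have hchoice : ∀ i : Fin N, ∃ γ : Measure (Pt d × Pt d), IsCoupling (μ i) nuhat γ ∧
      (∫⁻ p, ENNReal.ofReal (‖p.1 - p.2‖ ^ 2) ∂γ) ≤ W2sq (μ i) nuhat + ε := by
    intro i
    have hlt : W2sq (μ i) nuhat < W2sq (μ i) nuhat + ε :=
      ENNReal.lt_add_right (hWfin i) (by exact_mod_cast hε.ne')
    obtain ⟨c, hc, hclt⟩ := sInf_lt_iff.1 (lt_of_le_of_lt (le_refl _) hlt)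
    obtain ⟨γ, hγ, rfl⟩ := hc
    exact ⟨γ, hγ, hclt.le⟩
  choose γ hγcoup hγcost using hchoice
  haveI := hν
  haveI : ∀ i, IsProbabilityMeasure (γ i) := fun i => (hγcoup i).1
  choose S hS using fun i => (hμ i).2
  -- the conditional slice measures
  set m : Fin N → Pt d → Measure (Pt d) :=
    fun i a => ((γ i).restrict ({a} ×ˢ Set.univ)).map Prod.snd with hmdef
  have hma : ∀ (i : Fin N) (a : Pt d) (B : Set (Pt d)), MeasurableSet B →
      m i a B = γ i ({a} ×ˢ B) := by
    intro i a B hB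
    rw [hmdef]
    rw [Measure.map_apply measurable_snd hB, Measure.restrict_apply (measurable_snd hB)]
    congr 1
    ext p
    simp only [Set.mem_inter_iff, Set.mem_preimage, Set.mem_prod, Set.mem_singleton_iff,
      Set.mem_univ, and_true]
    tauto
  haveI hmfin : ∀ (i : Fin N) (a : Pt d), IsFiniteMeasure (m i a) := by
    intro i a
    constructor
    rw [hma i a _ MeasurableSet.univ]
    exact lt_of_le_of_lt (measure_mono (Set.subset_univ _)) (by simp [measure_univ])
  have hmuniv : ∀ (i : Fin N) (a : Pt d), m i a Set.univ = μ i {a} := by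
    intro i a
    rw [hma i a _ MeasurableSet.univ, ← (hγcoup i).2.1,
      Measure.map_apply measurable_fst (measurableSet_singleton a)]
    congr 1
    ext p
    simp only [Set.mem_prod, Set.mem_singleton_iff, Set.mem_univ, and_true, Set.mem_preimage]
  have hsum_m : ∀ i, ∑ a ∈ S i, m i a = nuhat := by
    intro i
    ext B hB
    rw [Measure.finset_sum_apply]
    have hdisj : Set.PairwiseDisjoint (↑(S i)) (fun a : Pt d => {a} ×ˢ B) := by
      intro a _ b _ hab
      refine Set.disjoint_left.2 fun p hp hp' => hab ?_
      rw [← hp.1, ← hp'.1]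
    have hprodmeas : ∀ a ∈ S i, MeasurableSet ({a} ×ˢ B : Set (Pt d × Pt d)) :=
      fun a _ => (measurableSet_singleton a).prod hB
    have hcompl : γ i (((↑(S i) : Set (Pt d))ᶜ) ×ˢ (Set.univ : Set (Pt d))) = 0 := by
      have : ((↑(S i) : Set (Pt d))ᶜ) ×ˢ (Set.univ : Set (Pt d))
          = Prod.fst ⁻¹' ((↑(S i) : Set (Pt d))ᶜ) := by ext p; simp
      rw [this, ← Measure.map_apply measurable_fst (S i).measurableSet.compl,
        (hγcoup i).2.1]
      exact hS i
    calc ∑ a ∈ S i, m i a B = ∑ a ∈ S i, γ i ({a} ×ˢ B) :=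
          Finset.sum_congr rfl fun a _ => hma i a B hB
      _ = γ i (⋃ a ∈ S i, {a} ×ˢ B) := (measure_biUnion_finset hdisj hprodmeas).symm
      _ = γ i (Set.univ ×ˢ B) := by
          refine le_antisymm (measure_mono (Set.iUnion₂_subset fun a _ =>
            Set.prod_mono (Set.subset_univ _) le_rfl)) ?_
          have hsub : (Set.univ : Set (Pt d)) ×ˢ B
              ⊆ (⋃ a ∈ S i, {a} ×ˢ B) ∪ (((↑(S i) : Set (Pt d))ᶜ) ×ˢ Set.univ) := by
            intro p hp
            by_cases hmem : p.1 ∈ S i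
            · left
              exact Set.mem_biUnion hmem ⟨rfl, hp.2⟩
            · right
              exact ⟨hmem, trivial⟩
          calc γ i (Set.univ ×ˢ B) ≤ γ i ((⋃ a ∈ S i, {a} ×ˢ B)
                ∪ (((↑(S i) : Set (Pt d))ᶜ) ×ˢ Set.univ)) := measure_mono hsub
            _ ≤ γ i (⋃ a ∈ S i, {a} ×ˢ B) + γ i (((↑(S i) : Set (Pt d))ᶜ) ×ˢ Set.univ) :=
                measure_union_le _ _
            _ = γ i (⋃ a ∈ S i, {a} ×ˢ B) := by rw [hcompl, add_zero]
      _ = nuhat B := by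
          have : (Set.univ : Set (Pt d)) ×ˢ B = Prod.snd ⁻¹' B := by ext p; simp
          rw [this, ← Measure.map_apply measurable_snd hB, (hγcoup i).2.2]
  have habs : ∀ i : Fin N, ∀ a ∈ S i, m i a ≪ nuhat := by
    intro i a ha
    refine Measure.AbsolutelyContinuous.mk fun B hB h0 => ?_
    have hsum : ∑ b ∈ S i, m i b B = 0 := by
      rw [← Measure.finset_sum_apply, hsum_m i, h0]
    exact (Finset.sum_eq_zero_iff.1 hsum) a ha
  set f : Fin N → Pt d → Pt d → ℝ≥0∞ := fun i a => (m i a).rnDeriv nuhat with hfdef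
  have hfmeas : ∀ (i : Fin N) (a : Pt d), Measurable (f i a) :=
    fun i a => Measure.measurable_rnDeriv _ _
  have hwd : ∀ i : Fin N, ∀ a ∈ S i, nuhat.withDensity (f i a) = m i a :=
    fun i a ha => Measure.withDensity_rnDeriv_eq _ _ (habs i a ha)
  have hone : ∀ᵐ y ∂nuhat, ∀ i, ∑ a ∈ S i, f i a y = 1 := by
    rw [ae_all_iff]
    intro i
    have h1 := rnDeriv_finset_sum (S i) (m i) nuhat
    rw [hsum_m i] at h1
    filter_upwards [h1, Measure.rnDeriv_self nuhat] with y hy1 hy2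
    rw [hfdef]
    dsimp only
    rw [← hy1, hy2]
  -- the glued plan
  set T : Finset (Fin N → Pt d) := Fintype.piFinset S with hTdef
  set w : (Fin N → Pt d) → ℝ≥0∞ := fun x => ∫⁻ y, ∏ i, f i (x i) y ∂nuhat with hwdef
  set π : Measure (Fin N → Pt d) := ∑ x ∈ T, w x • Measure.dirac x with hπdef
  have hprodmeas : ∀ x : Fin N → Pt d, Measurable fun y => ∏ i, f i (x i) y :=
    fun x => Finset.measurable_prod _ fun i _ => hfmeas i (x i)
  -- factorization identity
  have hfact : ∀ (j : Fin N) (h : Pt d → ℝ≥0∞) (y : Pt d),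
      (∀ i, ∑ a ∈ S i, f i a y = 1) →
      ∑ x ∈ T, (∏ i, f i (x i) y) * h (x j) = ∑ a ∈ S j, f j a y * h a := by
    intro j h y hy
    have hx : ∀ x : Fin N → Pt d, (∏ i, f i (x i) y) * h (x j)
        = ∏ i, (f i (x i) y * if i = j then h (x i) else 1) := by
      intro x
      rw [Finset.prod_mul_distrib]
      congr 1
      simp [Finset.prod_ite_eq']
    have hpus := Finset.prod_univ_sum S
      (fun i a => f i a y * if i = j then h a else 1)
    rw [Finset.sum_congr rfl fun x _ => hx x, hTdef, ← hpus]
    rw [Finset.prod_eq_single j (fun i _ hij => by simp [hij, ← Finset.sum_mul, hy i])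
      (fun hj => absurd (Finset.mem_univ j) hj)]
    simp
  -- π is a probability measure
  have hπuniv : ∀ (B : Set (Fin N → Pt d)), MeasurableSet B →
      π B = ∑ x ∈ T, w x * (if x ∈ B then 1 else 0) := by
    intro B hB
    rw [hπdef, Measure.finset_sum_apply]
    refine Finset.sum_congr rfl fun x _ => ?_
    rw [Measure.smul_apply, Measure.dirac_apply' x hB, smul_eq_mul]
    simp [Set.indicator_apply]
  have hsumw : ∀ (j : Fin N) (h : Pt d → ℝ≥0∞), Measurable h →
      ∑ x ∈ T, w x * h (x j) = ∫⁻ y, ∑ a ∈ S j, f j a y * h a ∂nuhat := by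
    intro j h hh
    have : ∀ x ∈ T, w x * h (x j) = ∫⁻ y, (∏ i, f i (x i) y) * h (x j) ∂nuhat := by
      intro x _
      rw [hwdef]
      exact (lintegral_mul_const _ (hprodmeas x)).symm
    rw [Finset.sum_congr rfl this,
      ← lintegral_finset_sum _ (fun x _ => (hprodmeas x).mul_const _)]
    refine lintegral_congr_ae ?_
    filter_upwards [hone] with y hy
    exact hfact j h y hy
  have hπprob : IsProbabilityMeasure π := by
    constructor
    rw [hπuniv Set.univ MeasurableSet.univ]
    simp only [Set.mem_univ, if_true, mul_one]
    rw [hwdef]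
    dsimp only
    rw [← lintegral_finset_sum _ (fun x _ => hprodmeas x)]
    have hae : ∀ᵐ y ∂nuhat, ∑ x ∈ T, ∏ i, f i (x i) y = 1 := by
      filter_upwards [hone] with y hy
      have hpus := Finset.prod_univ_sum S (fun i a => f i a y)
      rw [hTdef, ← hpus]
      simp only [hy]
      exact Finset.prod_const_one
    rw [lintegral_congr_ae hae, lintegral_one, measure_univ]
  have hπmarg : ∀ j : Fin N, π.map (fun x => x j) = μ j := by
    intro j
    haveI := (hμ j).1
    ext B hB
    rw [Measure.map_apply (measurable_pi_apply j) hB,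
      hπuniv _ (measurable_pi_apply j hB)]
    have hmh : Measurable (fun a : Pt d => if a ∈ B then (1 : ℝ≥0∞) else 0) :=
      Measurable.ite hB measurable_const measurable_const
    have hrw : ∀ x : Fin N → Pt d,
        (if x ∈ (fun x : Fin N → Pt d => x j) ⁻¹' B then (1:ℝ≥0∞) else 0)
        = if x j ∈ B then 1 else 0 := fun x => by simp [Set.mem_preimage]
    rw [Finset.sum_congr rfl fun x _ => by rw [hrw x]]
    rw [hsumw j _ hmh]
    rw [lintegral_finset_sum _ (fun a _ => (hfmeas j a).mul_const _)]
    have hterm : ∀ a ∈ S j, ∫⁻ y, f j a y * (if a ∈ B then 1 else 0) ∂nuhat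
        = if a ∈ B then μ j {a} else 0 := by
      intro a ha
      rw [lintegral_mul_const _ (hfmeas j a), Measure.lintegral_rnDeriv (habs j a ha),
        hmuniv j a]
      rw [mul_ite, mul_one, mul_zero]
    rw [Finset.sum_congr rfl hterm]
    -- now compute μ j B
    have h0 : μ j (B \ ↑(S j)) = 0 :=
      measure_mono_null (fun y hy => hy.2) (hS j)
    have hsplit : μ j B = μ j (B ∩ ↑(S j)) := by
      rw [← measure_inter_add_diff B (S j).measurableSet, h0, add_zero]
    have hunion : (B ∩ ↑(S j)) = ⋃ a ∈ (S j).filter (· ∈ B), ({a} : Set (Pt d)) := by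
      ext y
      simp only [Set.mem_inter_iff, Set.mem_iUnion, Finset.mem_filter, Set.mem_singleton_iff,
        Finset.mem_coe, exists_prop]
      constructor
      · rintro ⟨hyB, hyS⟩; exact ⟨y, ⟨hyS, hyB⟩, rfl⟩
      · rintro ⟨a, ⟨haS, haB⟩, rfl⟩; exact ⟨haB, haS⟩
    have hdisj : Set.PairwiseDisjoint (↑((S j).filter (· ∈ B)))
        (fun a : Pt d => ({a} : Set (Pt d))) := by
      intro a _ b _ hab
      exact Set.disjoint_singleton.2 hab
    rw [hsplit, hunion, measure_biUnion_finset hdisj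
      (fun a _ => measurableSet_singleton a), Finset.sum_filter]
  -- cost of π
  set c : (Fin N → Pt d) → ℝ≥0∞ := fun x => ∑ s : Fin N, ∑ t : Fin N,
    (if s < t then ENNReal.ofReal (l s * l t * ‖x s - x t‖ ^ 2) else 0) with hcdef
  have hmotπ : MOT l π = ∑ x ∈ T, w x * c x := by
    unfold MOT
    rw [hπdef, lintegral_finset_sum_measure]
    refine Finset.sum_congr rfl fun x _ => ?_
    rw [lintegral_smul_measure, lintegral_dirac, smul_eq_mul]
  have hnmeas : ∀ a : Pt d, Measurable fun y : Pt d => ENNReal.ofReal (‖a - y‖ ^ 2) :=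
    fun a => ((measurable_const.sub measurable_id).norm.pow_const 2).ennreal_ofReal
  have hsmeas : ∀ x : Fin N → Pt d, Measurable fun y : Pt d =>
      ∑ j, ENNReal.ofReal (l j) * ENNReal.ofReal (‖x j - y‖ ^ 2) :=
    fun x => Finset.measurable_sum _ fun j _ => (hnmeas (x j)).const_mul _
  have hgmeas : ∀ j : Fin N, Measurable fun y : Pt d =>
      ∑ a ∈ S j, f j a y * ENNReal.ofReal (‖a - y‖ ^ 2) :=
    fun j => Finset.measurable_sum _ fun a _ => (hfmeas j a).mul (hnmeas a)
  have hcost_x : ∀ x ∈ T, w x * c x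
      ≤ ∫⁻ y, (∏ i, f i (x i) y)
          * ∑ j, ENNReal.ofReal (l j) * ENNReal.ofReal (‖x j - y‖ ^ 2) ∂nuhat := by
    intro x _
    rw [hwdef]
    dsimp only
    rw [← lintegral_mul_const _ (hprodmeas x)]
    exact lintegral_mono fun y => mul_le_mul_right (mot_integrand_le l hl x y) _
  have hDa : ∀ (j : Fin N), ∀ a ∈ S j,
      ∫⁻ y, f j a y * ENNReal.ofReal (‖a - y‖ ^ 2) ∂nuhat
      = ∫⁻ p in ({a} ×ˢ Set.univ : Set (Pt d × Pt d)),
          ENNReal.ofReal (‖p.1 - p.2‖ ^ 2) ∂(γ j) := by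
    intro j a ha
    have h1 : ∫⁻ y, f j a y * ENNReal.ofReal (‖a - y‖ ^ 2) ∂nuhat
        = ∫⁻ y, ENNReal.ofReal (‖a - y‖ ^ 2) ∂(nuhat.withDensity (f j a)) := by
      rw [lintegral_withDensity_eq_lintegral_mul nuhat (hfmeas j a) (hnmeas a)]
      rfl
    rw [h1, hwd j a ha, hmdef]
    dsimp only
    rw [lintegral_map (hnmeas a) measurable_snd]
    refine setLIntegral_congr_fun ((measurableSet_singleton a).prod MeasurableSet.univ)
      (fun p hp => ?_)
    rw [hp.1]
  have hD : ∀ j : Fin N,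
      ∫⁻ y, ∑ a ∈ S j, f j a y * ENNReal.ofReal (‖a - y‖ ^ 2) ∂nuhat
      ≤ ∫⁻ p, ENNReal.ofReal (‖p.1 - p.2‖ ^ 2) ∂(γ j) := by
    intro j
    rw [lintegral_finset_sum (f := fun a y => f j a y * ENNReal.ofReal (‖a - y‖ ^ 2)) _
        (fun a _ => (hfmeas j a).mul (hnmeas a)),
      Finset.sum_congr rfl (hDa j)]
    have hdisj : Set.PairwiseDisjoint (↑(S j))
        (fun a : Pt d => ({a} ×ˢ Set.univ : Set (Pt d × Pt d))) := by
      intro a _ b _ hab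
      refine Set.disjoint_left.2 fun p hp hp' => hab ?_
      rw [← hp.1, ← hp'.1]
    rw [← lintegral_biUnion_finset hdisj
      (fun a _ => (measurableSet_singleton a).prod MeasurableSet.univ)]
    exact lintegral_mono' Measure.restrict_le_self le_rfl
  have hchain : MOT l π ≤ ∑ j, ENNReal.ofReal (l j) * (W2sq (μ j) nuhat + ε) := by
    rw [hmotπ]
    calc ∑ x ∈ T, w x * c x
        ≤ ∑ x ∈ T, ∫⁻ y, (∏ i, f i (x i) y)
            * ∑ j, ENNReal.ofReal (l j) * ENNReal.ofReal (‖x j - y‖ ^ 2) ∂nuhat :=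
          Finset.sum_le_sum hcost_x
      _ = ∫⁻ y, ∑ x ∈ T, (∏ i, f i (x i) y)
            * ∑ j, ENNReal.ofReal (l j) * ENNReal.ofReal (‖x j - y‖ ^ 2) ∂nuhat :=
          (lintegral_finset_sum _ fun x _ => (hprodmeas x).mul (hsmeas x)).symm
      _ = ∫⁻ y, ∑ j, ENNReal.ofReal (l j)
            * ∑ a ∈ S j, f j a y * ENNReal.ofReal (‖a - y‖ ^ 2) ∂nuhat := by
          refine lintegral_congr_ae ?_
          filter_upwards [hone] with y hy
          calc ∑ x ∈ T, (∏ i, f i (x i) y)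
              * ∑ j, ENNReal.ofReal (l j) * ENNReal.ofReal (‖x j - y‖ ^ 2)
              = ∑ j, ∑ x ∈ T, ENNReal.ofReal (l j)
                  * ((∏ i, f i (x i) y) * ENNReal.ofReal (‖x j - y‖ ^ 2)) := by
                rw [Finset.sum_comm]
                refine Finset.sum_congr rfl fun x _ => ?_
                rw [Finset.mul_sum]
                exact Finset.sum_congr rfl fun j _ => by ring
            _ = ∑ j, ENNReal.ofReal (l j)
                  * ∑ a ∈ S j, f j a y * ENNReal.ofReal (‖a - y‖ ^ 2) := by
                refine Finset.sum_congr rfl fun j _ => ?_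
                rw [← Finset.mul_sum, hfact j (fun a => ENNReal.ofReal (‖a - y‖ ^ 2)) y hy]
      _ = ∑ j, ENNReal.ofReal (l j)
            * ∫⁻ y, ∑ a ∈ S j, f j a y * ENNReal.ofReal (‖a - y‖ ^ 2) ∂nuhat := by
          rw [lintegral_finset_sum _ fun j _ => (hgmeas j).const_mul _]
          exact Finset.sum_congr rfl fun j _ => lintegral_const_mul _ (hgmeas j)
      _ ≤ ∑ j, ENNReal.ofReal (l j) * (W2sq (μ j) nuhat + ε) :=
          Finset.sum_le_sum fun j _ =>
            mul_le_mul_right (le_trans (hD j) (hγcost j)) _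
  have hfinal : ∑ j, ENNReal.ofReal (l j) * (W2sq (μ j) nuhat + ε)
      = Psi l μ nuhat + ε := by
    have hsum1 : ∑ j, ENNReal.ofReal (l j) = 1 := by
      rw [← ENNReal.ofReal_sum_of_nonneg (fun i _ => (hl.1 i).le), hl.2, ENNReal.ofReal_one]
    simp only [mul_add]
    rw [Finset.sum_add_distrib, ← Finset.sum_mul, hsum1, one_mul]
    rfl
  calc MOT l pihat ≤ MOT l π := hπopt π ⟨hπprob, hπmarg⟩
    _ ≤ ∑ j, ENNReal.ofReal (l j) * (W2sq (μ j) nuhat + ε) := hchain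
    _ = Psi l μ nuhat + ε := hfinal

lemma psi_le_MOT {d N : ℕ} (μ : Fin N → Measure (Pt d))
    (l : Fin N → ℝ) (hl : InSimplex l)
    (pihat : Measure (Fin N → Pt d)) (hplan : IsPlan μ pihat) :
    Psi l μ (pihat.map (wmean l)) ≤ MOT l pihat := by
  haveI := hplan.1
  set ν := pihat.map (wmean l) with hν
  have hmw := measurable_wmean (d := d) l
  have hcost : ∀ i, W2sq (μ i) ν ≤ ∫⁻ x, ENNReal.ofReal (‖x i - wmean l x‖ ^ 2) ∂pihat := by
    intro i
    have hm : Measurable (fun x : Fin N → Pt d => (x i, wmean l x)) :=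
      (measurable_pi_apply i).prodMk hmw
    refine sInf_le ⟨pihat.map (fun x => (x i, wmean l x)), ⟨?_, ?_, ?_⟩, ?_⟩
    · exact Measure.isProbabilityMeasure_map hm.aemeasurable
    · rw [Measure.map_map measurable_fst hm]; exact hplan.2 i
    · rw [Measure.map_map measurable_snd hm]; rfl
    · rw [lintegral_map ?_ hm]
      · exact (measurable_fst.sub measurable_snd).norm.pow_const 2 |>.ennreal_ofReal
  have hmeas : ∀ i : Fin N, Measurable
      (fun x : Fin N → Pt d => ENNReal.ofReal (‖x i - wmean l x‖ ^ 2)) := fun i =>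
    ((measurable_pi_apply i).sub hmw).norm.pow_const 2 |>.ennreal_ofReal
  calc Psi l μ ν ≤ ∑ i, ENNReal.ofReal (l i)
        * ∫⁻ x, ENNReal.ofReal (‖x i - wmean l x‖ ^ 2) ∂pihat :=
        Finset.sum_le_sum fun i _ => mul_le_mul_right (hcost i) _
    _ = ∫⁻ x, ∑ i, ENNReal.ofReal (l i) * ENNReal.ofReal (‖x i - wmean l x‖ ^ 2) ∂pihat := by
        rw [lintegral_finset_sum _ fun i _ => (hmeas i).const_mul _]
        exact Finset.sum_congr rfl fun i _ => (lintegral_const_mul _ (hmeas i)).symm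
    _ = MOT l pihat := by
        unfold MOT
        exact lintegral_congr fun x => (mot_integrand_eq l hl x).symm

end Aux

/-- If `π̂` is an optimal MOT plan and `ν̂` is an optimal barycenter,
then `Φ(π̂) = Ψ(ν̂)`. -/
theorem stmt8 {d N : ℕ} (μ : Fin N → Measure (Pt d))
    (hμ : ∀ i, IsProbabilityMeasure (μ i) ∧ FinitelySupported (μ i))
    (l : Fin N → ℝ) (hl : InSimplex l)
    (pihat : Measure (Fin N → Pt d)) (hplan : IsPlan μ pihat)
    (hπopt : ∀ π, IsPlan μ π → MOT l pihat ≤ MOT l π)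
    (nuhat : Measure (Pt d)) (hν : IsProbabilityMeasure nuhat)
    (hνopt : ∀ ν : Measure (Pt d), IsProbabilityMeasure ν → Psi l μ nuhat ≤ Psi l μ ν) :
    MOT l pihat = Psi l μ nuhat := by
  apply le_antisymm
  · exact MOT_le_psi μ hμ l hl pihat hπopt nuhat hν
  · haveI := hplan.1
    have hprob : IsProbabilityMeasure (pihat.map (wmean l)) :=
      Measure.isProbabilityMeasure_map (measurable_wmean l).aemeasurable
    exact le_trans (hνopt _ hprob) (psi_le_MOT μ l hl pihat hplan)
end
end

section
/- Let ν̂ be an optimal barycenter, i.e. a minimizer of Ψ over probability measures on ℝ^d. Then for every finitely supported probability measure ν̃ on ℝ^d it holds that Ψ(ν̃) ≤ Ψ(ν̂) + W₂²(ν̃, ν̂). -/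
open MeasureTheory
open scoped ENNReal

noncomputable section

lemma map_finset_sum' {α β ι : Type*} [MeasurableSpace α] [MeasurableSpace β]
    (s : Finset ι) (μ : ι → Measure α) {f : α → β} (hf : Measurable f) :
    (∑ i ∈ s, μ i).map f = ∑ i ∈ s, (μ i).map f := by
  classical
  induction s using Finset.induction with
  | empty => simp
  | insert _ _ h ih =>
    rw [Finset.sum_insert h, Measure.map_add _ _ hf, ih, Finset.sum_insert h]

lemma withDensity_finset_sum {α ι : Type*} [MeasurableSpace α] (μ : Measure α)
    (s : Finset ι) (f : ι → α → ℝ≥0∞) (hf : ∀ i, Measurable (f i)) :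
    μ.withDensity (fun y => ∑ i ∈ s, f i y) = ∑ i ∈ s, μ.withDensity (f i) := by
  classical
  induction s using Finset.induction with
  | empty => simp
  | insert _ _ h ih =>
    simp only [Finset.sum_insert h]
    rw [← ih]
    rename_i a s
    have : (fun y => f a y + ∑ i ∈ s, f i y) = (f a + fun y => ∑ i ∈ s, f i y) := rfl
    rw [this, withDensity_add_left (hf _)]

lemma fin_supp_eq_sum {α : Type*} [MeasurableSpace α] [MeasurableSingletonClass α]
    (ρ : Measure α) (S : Finset α) (hS : ρ ((S : Set α)ᶜ) = 0) :
    ρ = ∑ x ∈ S, ρ {x} • Measure.dirac x := by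
  classical
  ext A hA
  rw [Measure.finset_sum_apply]
  have h0 : ρ (A \ (S : Set α)) = 0 :=
    measure_mono_null (Set.diff_subset_iff.mpr (by simp)) hS
  have h1 : ρ A = ρ (A ∩ (S : Set α)) := by
    have := measure_inter_add_diff (μ := ρ) A (S.measurableSet : MeasurableSet (S : Set α))
    rw [← this, h0, add_zero]
  have h2 : A ∩ (S : Set α) = ⋃ x ∈ S, (A ∩ {x}) := by
    ext p; simp [and_comm]
  have h3 : ρ (A ∩ (S : Set α)) = ∑ x ∈ S, ρ (A ∩ {x}) := by
    rw [h2]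
    exact measure_biUnion_finset
      (fun x _ y _ hxy => by
        simp only [Function.onFun, Set.disjoint_left]
        rintro p ⟨-, hp1⟩ ⟨-, hp2⟩
        simp only [Set.mem_singleton_iff] at hp1 hp2
        exact hxy (hp1 ▸ hp2 ▸ rfl))
      (fun x _ => hA.inter (measurableSet_singleton x))
  rw [h1, h3]
  refine Finset.sum_congr rfl (fun x _ => ?_)
  rw [Measure.smul_apply, Measure.dirac_apply' _ hA, smul_eq_mul]
  by_cases hxA : x ∈ A
  · rw [show A ∩ {x} = {x} by ext; aesop]
    simp [Set.indicator_of_mem hxA]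
  · rw [show A ∩ {x} = ∅ by ext; aesop]
    simp [Set.indicator_of_notMem hxA]

lemma coupling_disintegration {α : Type*} [MeasurableSpace α] [MeasurableSingletonClass α]
    (ν ρ : Measure α) [IsProbabilityMeasure ν]
    (S : Finset α) (hS : ρ ((S : Set α)ᶜ) = 0)
    (γ : Measure (α × α)) (hγ : IsCoupling ρ ν γ) :
    ∃ f : α → α → ℝ≥0∞, (∀ x, Measurable (f x)) ∧
      (∀ᵐ y ∂ν, ∑ x ∈ S, f x y = 1) ∧
      (∀ x, ∫⁻ y, f x y ∂ν = ρ {x}) ∧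
      (∀ c : α → α → ℝ≥0∞, Measurable (Function.uncurry c) →
        ∫⁻ p, c p.1 p.2 ∂γ = ∫⁻ y, ∑ x ∈ S, f x y * c x y ∂ν) := by
  classical
  obtain ⟨hprob, hfst, hsnd⟩ := hγ
  haveI := hprob
  set νx : α → Measure α := fun x => (γ.restrict ({x} ×ˢ Set.univ)).map Prod.snd with hνx
  have hsing : ∀ x : α, MeasurableSet ({x} ×ˢ (Set.univ : Set α)) :=
    fun x => (measurableSet_singleton x).prod MeasurableSet.univ
  have hνx_apply : ∀ x (A : Set α), MeasurableSet A → νx x A = γ ({x} ×ˢ A) := by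
    intro x A hA
    rw [hνx]
    rw [Measure.map_apply measurable_snd hA, Measure.restrict_apply (measurable_snd hA)]
    congr 1
    ext p
    simp only [Set.mem_inter_iff, Set.mem_preimage, Set.mem_prod, Set.mem_singleton_iff,
      Set.mem_univ, and_true]
    tauto
  -- νx x ≤ ν for all x
  have hle : ∀ x, νx x ≤ ν := by
    intro x
    rw [Measure.le_iff]
    intro A hA
    rw [hνx_apply x A hA, ← hsnd, Measure.map_apply measurable_snd hA]
    exact measure_mono (fun p hp => hp.2)
  have hfin : ∀ x, IsFiniteMeasure (νx x) := by
    intro x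
    refine ⟨lt_of_le_of_lt ?_ (measure_lt_top ν Set.univ)⟩
    exact (hle x) Set.univ
  have hac : ∀ x, νx x ≪ ν := fun x => Measure.absolutelyContinuous_of_le (hle x)
  refine ⟨fun x => (νx x).rnDeriv ν, fun x => Measure.measurable_rnDeriv _ _, ?_, ?_, ?_⟩
  · -- sum of densities is 1 a.e.
    have hwd : ∀ x, ν.withDensity ((νx x).rnDeriv ν) = νx x := by
      intro x
      haveI := hfin x
      exact Measure.withDensity_rnDeriv_eq _ _ (hac x)
    have hsum : ∑ x ∈ S, νx x = ν := by
      ext A hA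
      rw [Measure.finset_sum_apply]
      simp_rw [fun x => hνx_apply x A hA]
      have hdisj : (S : Set α).PairwiseDisjoint (fun x => {x} ×ˢ A) := by
        intro x _ y _ hxy
        simp only [Function.onFun, Set.disjoint_left]
        rintro p ⟨hp1, -⟩ ⟨hp2, -⟩
        simp only [Set.mem_singleton_iff] at hp1 hp2
        exact hxy (hp1 ▸ hp2 ▸ rfl)
      have h1 : ∑ x ∈ S, γ ({x} ×ˢ A) = γ (⋃ x ∈ S, {x} ×ˢ A) :=
        (measure_biUnion_finset hdisj (fun x _ => (measurableSet_singleton x).prod hA)).symm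
      have h2 : (⋃ x ∈ S, ({x} : Set α) ×ˢ A) = (S : Set α) ×ˢ A := by
        ext ⟨p1, p2⟩; simp [Set.mem_prod]
      have hnull : γ (((S : Set α)ᶜ) ×ˢ (Set.univ : Set α)) = 0 := by
        have : ((S : Set α)ᶜ) ×ˢ (Set.univ : Set α) = Prod.fst ⁻¹' ((S : Set α)ᶜ) := by
          ext p; simp
        rw [this, ← Measure.map_apply measurable_fst S.measurableSet.compl, hfst]
        exact hS
      have h3 : γ ((S : Set α) ×ˢ A) = γ (Prod.snd ⁻¹' A) := by
        apply le_antisymm (measure_mono (fun p hp => hp.2))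
        calc γ (Prod.snd ⁻¹' A) ≤ γ ((S : Set α) ×ˢ A ∪ ((S : Set α)ᶜ) ×ˢ Set.univ) := by
              apply measure_mono
              intro p hp
              by_cases hpS : p.1 ∈ (S : Set α)
              · exact Or.inl ⟨hpS, hp⟩
              · exact Or.inr ⟨hpS, trivial⟩
          _ ≤ γ ((S : Set α) ×ˢ A) + γ (((S : Set α)ᶜ) ×ˢ Set.univ) := measure_union_le _ _
          _ = γ ((S : Set α) ×ˢ A) := by rw [hnull, add_zero]
      rw [h1, h2, h3, ← Measure.map_apply measurable_snd hA, hsnd]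
    have hwdsum : ν.withDensity (fun y => ∑ x ∈ S, (νx x).rnDeriv ν y) = ν := by
      rw [withDensity_finset_sum ν S _ (fun x => Measure.measurable_rnDeriv _ _)]
      simp_rw [hwd]
      exact hsum
    have hint : ∫⁻ y, ∑ x ∈ S, (νx x).rnDeriv ν y ∂ν ≠ ⊤ := by
      rw [lintegral_finset_sum _ (fun x _ => Measure.measurable_rnDeriv _ _)]
      refine (ENNReal.sum_lt_top.mpr ?_).ne
      intro x _
      have := Measure.lintegral_rnDeriv_lt_top (νx x) ν
      haveI := hfin x
      exact Measure.lintegral_rnDeriv_lt_top _ _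
    have := (withDensity_eq_iff
      (Finset.measurable_sum _ (fun x _ => Measure.measurable_rnDeriv _ _)).aemeasurable
      aemeasurable_one hint).mp (by rw [hwdsum]; exact withDensity_one.symm)
    filter_upwards [this] with y hy using by simpa using hy
  · -- total mass
    intro x
    have hwd : ν.withDensity ((νx x).rnDeriv ν) = νx x := by
      haveI := hfin x
      exact Measure.withDensity_rnDeriv_eq _ _ (hac x)
    have : ∫⁻ y, (νx x).rnDeriv ν y ∂ν = νx x Set.univ := by
      rw [← setLIntegral_univ, ← withDensity_apply _ MeasurableSet.univ, hwd]
    rw [this, hνx_apply x Set.univ MeasurableSet.univ]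
    have : ({x} : Set α) ×ˢ (Set.univ : Set α) = Prod.fst ⁻¹' {x} := by ext ⟨p1, p2⟩; simp [eq_comm]
    rw [this, ← Measure.map_apply measurable_fst (measurableSet_singleton x), hfst]
  · -- cost disintegration
    intro c hc
    have hcx : ∀ x : α, Measurable (fun y => c x y) :=
      fun x => hc.comp measurable_prodMk_left
    have hwd : ∀ x, ν.withDensity ((νx x).rnDeriv ν) = νx x := by
      intro x
      haveI := hfin x
      exact Measure.withDensity_rnDeriv_eq _ _ (hac x)
    have hnull : γ (((S : Set α) ×ˢ (Set.univ : Set α))ᶜ) = 0 := by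
      have hcompl : ((S : Set α) ×ˢ (Set.univ : Set α))ᶜ = ((S : Set α)ᶜ) ×ˢ (Set.univ : Set α) := by
        ext p; simp
      have : ((S : Set α)ᶜ) ×ˢ (Set.univ : Set α) = Prod.fst ⁻¹' ((S : Set α)ᶜ) := by
        ext p; simp
      rw [hcompl, this, ← Measure.map_apply measurable_fst S.measurableSet.compl, hfst]
      exact hS
    have hBmeas : MeasurableSet ((S : Set α) ×ˢ (Set.univ : Set α)) :=
      S.measurableSet.prod MeasurableSet.univ
    have step1 : ∫⁻ p, c p.1 p.2 ∂γ = ∫⁻ p in (S : Set α) ×ˢ Set.univ, c p.1 p.2 ∂γ := by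
      rw [← lintegral_add_compl (fun p => c p.1 p.2) hBmeas,
        setLIntegral_measure_zero _ _ hnull, add_zero]
    have hU : ((S : Set α) ×ˢ (Set.univ : Set α)) = ⋃ x ∈ S, ({x} : Set α) ×ˢ Set.univ := by
      ext ⟨p1, p2⟩; simp
    have hdisj : (S : Set α).PairwiseDisjoint (fun x => ({x} : Set α) ×ˢ (Set.univ : Set α)) := by
      intro x _ y _ hxy
      simp only [Function.onFun, Set.disjoint_left]
      rintro p ⟨hp1, -⟩ ⟨hp2, -⟩
      simp only [Set.mem_singleton_iff] at hp1 hp2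
      exact hxy (hp1 ▸ hp2 ▸ rfl)
    have step2 : ∫⁻ p in (S : Set α) ×ˢ Set.univ, c p.1 p.2 ∂γ
        = ∑ x ∈ S, ∫⁻ p in ({x} : Set α) ×ˢ Set.univ, c p.1 p.2 ∂γ := by
      rw [hU]
      exact lintegral_biUnion_finset hdisj (fun x _ => hsing x) _
    have step3 : ∀ x ∈ S, ∫⁻ p in ({x} : Set α) ×ˢ Set.univ, c p.1 p.2 ∂γ
        = ∫⁻ y, (νx x).rnDeriv ν y * c x y ∂ν := by
      intro x _
      have e1 : ∫⁻ p in ({x} : Set α) ×ˢ Set.univ, c p.1 p.2 ∂γ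
          = ∫⁻ p in ({x} : Set α) ×ˢ Set.univ, c x p.2 ∂γ := by
        refine setLIntegral_congr_fun (hsing x) ?_
        rintro p ⟨hp1, -⟩
        simp only [Set.mem_singleton_iff] at hp1
        show c p.1 p.2 = c x p.2
        rw [hp1]
      have e2 : ∫⁻ p in ({x} : Set α) ×ˢ Set.univ, c x p.2 ∂γ = ∫⁻ y, c x y ∂(νx x) := by
        rw [hνx, lintegral_map (hcx x) measurable_snd]
      calc ∫⁻ p in ({x} : Set α) ×ˢ Set.univ, c p.1 p.2 ∂γ = ∫⁻ y, c x y ∂(νx x) := by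
            rw [e1, e2]
        _ = ∫⁻ y, c x y ∂(ν.withDensity ((νx x).rnDeriv ν)) := by rw [hwd x]
        _ = ∫⁻ y, ((νx x).rnDeriv ν * fun y => c x y) y ∂ν :=
            lintegral_withDensity_eq_lintegral_mul ν (Measure.measurable_rnDeriv _ _) (hcx x)
        _ = ∫⁻ y, (νx x).rnDeriv ν y * c x y ∂ν := rfl
    rw [step1, step2, Finset.sum_congr rfl step3,
      ← lintegral_finset_sum _ (f := fun x y => (νx x).rnDeriv ν y * c x y)
        (fun x _ => (Measure.measurable_rnDeriv _ _).mul (hcx x))]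

lemma coupling_pushforward {α : Type*} [MeasurableSpace α] [MeasurableSingletonClass α]
    (ν ρ : Measure α) [IsProbabilityMeasure ν] [IsProbabilityMeasure ρ]
    (S : Finset α) (hS : ρ ((S : Set α)ᶜ) = 0)
    (f : α → α → ℝ≥0∞) (hf : ∀ x, Measurable (f x))
    (hsum : ∀ᵐ y ∂ν, ∑ x ∈ S, f x y = 1)
    (hmass : ∀ x, ∫⁻ y, f x y ∂ν = ρ {x})
    (T : α → α) (hT : Measurable T) :
    IsCoupling ρ (ν.map T) (∑ x ∈ S, (ν.withDensity (f x)).map (fun y => (x, T y))) ∧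
    (∀ c : α × α → ℝ≥0∞, Measurable c →
      ∫⁻ p, c p ∂(∑ x ∈ S, (ν.withDensity (f x)).map (fun y => (x, T y)))
        = ∫⁻ y, ∑ x ∈ S, f x y * c (x, T y) ∂ν) := by
  classical
  set τ := ∑ x ∈ S, (ν.withDensity (f x)).map (fun y => (x, T y)) with hτ
  have hpair : ∀ x : α, Measurable (fun y => ((x, T y) : α × α)) :=
    fun x => measurable_const.prodMk hT
  have hwdsum : ν.withDensity (fun y => ∑ x ∈ S, f x y) = ν := by
    rw [withDensity_congr_ae hsum]; exact withDensity_one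
  have hmassx : ∀ x, (ν.withDensity (f x)) Set.univ = ρ {x} := by
    intro x
    rw [withDensity_apply _ MeasurableSet.univ, setLIntegral_univ, hmass x]
  have hfst : τ.map Prod.fst = ρ := by
    rw [hτ, map_finset_sum' _ _ measurable_fst]
    have : ∀ x ∈ S, ((ν.withDensity (f x)).map (fun y => (x, T y))).map Prod.fst
        = ρ {x} • Measure.dirac x := by
      intro x _
      rw [Measure.map_map measurable_fst (hpair x)]
      have : (Prod.fst ∘ fun y => ((x, T y) : α × α)) = fun _ => x := rfl
      rw [this, Measure.map_const, hmassx x]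
    rw [Finset.sum_congr rfl this, ← fin_supp_eq_sum ρ S hS]
  have hsnd : τ.map Prod.snd = ν.map T := by
    rw [hτ, map_finset_sum' _ _ measurable_snd]
    have : ∀ x ∈ S, ((ν.withDensity (f x)).map (fun y => (x, T y))).map Prod.snd
        = (ν.withDensity (f x)).map T := by
      intro x _
      rw [Measure.map_map measurable_snd (hpair x)]
      rfl
    rw [Finset.sum_congr rfl this, ← map_finset_sum' _ _ hT,
      ← withDensity_finset_sum ν S f hf, hwdsum]
  have hprob : IsProbabilityMeasure τ := by
    constructor
    have : τ.map Prod.fst Set.univ = τ Set.univ := by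
      rw [Measure.map_apply measurable_fst MeasurableSet.univ]; rfl
    rw [← this, hfst]
    exact measure_univ
  refine ⟨⟨hprob, hfst, hsnd⟩, ?_⟩
  intro c hc
  rw [hτ, lintegral_finset_sum_measure]
  have : ∀ x ∈ S, ∫⁻ p, c p ∂((ν.withDensity (f x)).map (fun y => (x, T y)))
      = ∫⁻ y, f x y * c (x, T y) ∂ν := by
    intro x _
    calc ∫⁻ p, c p ∂((ν.withDensity (f x)).map (fun y => (x, T y)))
        = ∫⁻ y, c (x, T y) ∂(ν.withDensity (f x)) := lintegral_map hc (hpair x)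
      _ = ∫⁻ y, (f x * fun y => c (x, T y)) y ∂ν :=
          lintegral_withDensity_eq_lintegral_mul ν (hf x) (hc.comp (hpair x))
      _ = ∫⁻ y, f x y * c (x, T y) ∂ν := rfl
  rw [Finset.sum_congr rfl this]
  exact (lintegral_finset_sum S (f := fun x y => f x y * c (x, T y))
    (fun x _ => (hf x).mul (hc.comp (hpair x)))).symm

lemma coupling_pairs {α : Type*} [MeasurableSpace α] [MeasurableSingletonClass α]
    (ν ρ η : Measure α) [IsProbabilityMeasure ν] [IsProbabilityMeasure ρ]
    (S T : Finset α) (hS : ρ ((S : Set α)ᶜ) = 0) (hT : η ((T : Set α)ᶜ) = 0)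
    (f g : α → α → ℝ≥0∞) (hf : ∀ x, Measurable (f x)) (hg : ∀ z, Measurable (g z))
    (hsumf : ∀ᵐ y ∂ν, ∑ x ∈ S, f x y = 1) (hsumg : ∀ᵐ y ∂ν, ∑ z ∈ T, g z y = 1)
    (hmassf : ∀ x, ∫⁻ y, f x y ∂ν = ρ {x}) (hmassg : ∀ z, ∫⁻ y, g z y ∂ν = η {z}) :
    IsCoupling ρ η (∑ x ∈ S, ∑ z ∈ T, (∫⁻ y, f x y * g z y ∂ν) • Measure.dirac ((x, z) : α × α)) ∧
    (∀ c : α × α → ℝ≥0∞, Measurable c →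
      ∫⁻ p, c p ∂(∑ x ∈ S, ∑ z ∈ T, (∫⁻ y, f x y * g z y ∂ν) • Measure.dirac ((x, z) : α × α))
        = ∫⁻ y, ∑ x ∈ S, ∑ z ∈ T, f x y * g z y * c (x, z) ∂ν) := by
  classical
  set β := ∑ x ∈ S, ∑ z ∈ T, (∫⁻ y, f x y * g z y ∂ν) • Measure.dirac ((x, z) : α × α) with hβ
  have hfst : β.map Prod.fst = ρ := by
    rw [hβ, map_finset_sum' _ _ measurable_fst]
    have h1 : ∀ x ∈ S, (∑ z ∈ T, (∫⁻ y, f x y * g z y ∂ν) • Measure.dirac ((x, z) : α × α)).map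
        Prod.fst = ρ {x} • Measure.dirac x := by
      intro x _
      rw [map_finset_sum' _ _ measurable_fst]
      have : ∀ z ∈ T, ((∫⁻ y, f x y * g z y ∂ν) • Measure.dirac ((x, z) : α × α)).map Prod.fst
          = (∫⁻ y, f x y * g z y ∂ν) • Measure.dirac x := by
        intro z _
        rw [Measure.map_smul, Measure.map_dirac' measurable_fst]
      rw [Finset.sum_congr rfl this, ← Finset.sum_smul]
      congr 1
      rw [← lintegral_finset_sum _ (f := fun z y => f x y * g z y) (fun z _ => (hf x).mul (hg z))]
      have : ∫⁻ y, ∑ z ∈ T, f x y * g z y ∂ν = ∫⁻ y, f x y ∂ν := by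
        apply lintegral_congr_ae
        filter_upwards [hsumg] with y hy
        rw [← Finset.mul_sum, hy, mul_one]
      rw [this, hmassf x]
    rw [Finset.sum_congr rfl h1, ← fin_supp_eq_sum ρ S hS]
  have hsnd : β.map Prod.snd = η := by
    rw [hβ, map_finset_sum' _ _ measurable_snd]
    have h0 : ∀ x ∈ S, (∑ z ∈ T, (∫⁻ y, f x y * g z y ∂ν) • Measure.dirac ((x, z) : α × α)).map
        Prod.snd = ∑ z ∈ T, (∫⁻ y, f x y * g z y ∂ν) • Measure.dirac z := by
      intro x _
      rw [map_finset_sum' _ _ measurable_snd]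
      refine Finset.sum_congr rfl (fun z _ => ?_)
      rw [Measure.map_smul, Measure.map_dirac' measurable_snd]
    rw [Finset.sum_congr rfl h0, Finset.sum_comm]
    have h1 : ∀ z ∈ T, ∑ x ∈ S, (∫⁻ y, f x y * g z y ∂ν) • Measure.dirac z
        = η {z} • Measure.dirac z := by
      intro z _
      rw [← Finset.sum_smul]
      congr 1
      rw [← lintegral_finset_sum _ (f := fun x y => f x y * g z y) (fun x _ => (hf x).mul (hg z))]
      have : ∫⁻ y, ∑ x ∈ S, f x y * g z y ∂ν = ∫⁻ y, g z y ∂ν := by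
        apply lintegral_congr_ae
        filter_upwards [hsumf] with y hy
        simp_rw [← Finset.sum_mul, hy, one_mul]
      rw [this, hmassg z]
    rw [Finset.sum_congr rfl h1, ← fin_supp_eq_sum η T hT]
  have hprob : IsProbabilityMeasure β := by
    constructor
    have : β.map Prod.fst Set.univ = β Set.univ := by
      rw [Measure.map_apply measurable_fst MeasurableSet.univ]; rfl
    rw [← this, hfst]
    exact measure_univ
  refine ⟨⟨hprob, hfst, hsnd⟩, ?_⟩
  intro c hc
  rw [hβ, lintegral_finset_sum_measure]
  have : ∀ x ∈ S, ∫⁻ p, c p ∂(∑ z ∈ T, (∫⁻ y, f x y * g z y ∂ν) • Measure.dirac ((x, z) : α × α))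
      = ∫⁻ y, ∑ z ∈ T, f x y * g z y * c (x, z) ∂ν := by
    intro x _
    rw [lintegral_finset_sum_measure]
    have h2 : ∀ z ∈ T, ∫⁻ p, c p ∂((∫⁻ y, f x y * g z y ∂ν) • Measure.dirac ((x, z) : α × α))
        = ∫⁻ y, f x y * g z y * c (x, z) ∂ν := by
      intro z _
      rw [lintegral_smul_measure, lintegral_dirac' _ hc,
        lintegral_mul_const (f := fun y => f x y * g z y) _ ((hf x).mul (hg z)), smul_eq_mul]
    rw [Finset.sum_congr rfl h2,
      ← lintegral_finset_sum _ (f := fun z y => f x y * g z y * c (x, z))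
        (fun z _ => ((hf x).mul (hg z)).mul_const _)]
  rw [Finset.sum_congr rfl this,
    ← lintegral_finset_sum _ (f := fun x y => ∑ z ∈ T, f x y * g z y * c (x, z))
      (fun x _ => Finset.measurable_sum _
      (fun z _ => ((hf x).mul (hg z)).mul_const _))]

lemma mean_identity {E : Type*} [NormedAddCommGroup E] [InnerProductSpace ℝ E]
    {ι : Type*} (s : Finset ι) (w : ι → ℝ) (pts : ι → E)
    (hw : ∑ i ∈ s, w i = 1) (c : E) :
    ∑ i ∈ s, w i * ‖pts i - c‖ ^ 2
      = (∑ i ∈ s, w i * ‖pts i - (∑ j ∈ s, w j • pts j)‖ ^ 2)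
        + ‖(∑ j ∈ s, w j • pts j) - c‖ ^ 2 := by
  set m : E := ∑ j ∈ s, w j • pts j with hm
  have hzero : ∑ i ∈ s, w i • (pts i - m) = 0 := by
    simp_rw [smul_sub]
    rw [Finset.sum_sub_distrib, ← Finset.sum_smul, hw, one_smul, hm]
    exact sub_self _
  have expand : ∀ i, w i * ‖pts i - c‖ ^ 2
      = w i * ‖pts i - m‖ ^ 2 + (2 * (w i * inner ℝ (pts i - m) (m - c)) + w i * ‖m - c‖ ^ 2) := by
    intro i
    have h1 : pts i - c = (pts i - m) + (m - c) := by abel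
    rw [h1, norm_add_sq_real]
    ring
  rw [Finset.sum_congr rfl (fun i _ => expand i), Finset.sum_add_distrib, Finset.sum_add_distrib]
  have h2 : ∑ i ∈ s, 2 * (w i * inner ℝ (pts i - m) (m - c)) = 0 := by
    have : ∑ i ∈ s, w i * (inner ℝ (pts i - m) (m - c) : ℝ)
        = inner ℝ (∑ i ∈ s, w i • (pts i - m)) (m - c) := by
      rw [sum_inner]
      exact Finset.sum_congr rfl (fun i _ => (real_inner_smul_left _ _ _).symm)
    rw [← Finset.mul_sum, this, hzero, inner_zero_left, mul_zero]
  rw [h2, zero_add, ← Finset.sum_mul, hw, one_mul]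

lemma weighted_cs {ι : Type*} (s : Finset ι) (q v : ι → ℝ)
    (hq0 : ∀ i ∈ s, 0 ≤ q i) (hq1 : ∑ i ∈ s, q i = 1) :
    (∑ i ∈ s, q i * v i) ^ 2 ≤ ∑ i ∈ s, q i * v i ^ 2 := by
  have h := Finset.sum_mul_sq_le_sq_mul_sq s (fun i => Real.sqrt (q i))
    (fun i => Real.sqrt (q i) * v i)
  have e1 : ∑ i ∈ s, Real.sqrt (q i) * (Real.sqrt (q i) * v i) = ∑ i ∈ s, q i * v i := by
    refine Finset.sum_congr rfl (fun i hi => ?_)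
    rw [← mul_assoc, Real.mul_self_sqrt (hq0 i hi)]
  have e2 : ∑ i ∈ s, Real.sqrt (q i) ^ 2 = 1 := by
    rw [← hq1]
    exact Finset.sum_congr rfl (fun i hi => Real.sq_sqrt (hq0 i hi))
  have e3 : ∑ i ∈ s, (Real.sqrt (q i) * v i) ^ 2 = ∑ i ∈ s, q i * v i ^ 2 := by
    refine Finset.sum_congr rfl (fun i hi => ?_)
    rw [mul_pow, Real.sq_sqrt (hq0 i hi)]
  rw [e1, e2, e3, one_mul] at h
  exact h

lemma amgm_theta (u b θ : ℝ) (hθ : 0 < θ) (hu : 0 ≤ u) (hb : 0 ≤ b) :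
    2 * u * b ≤ θ⁻¹ * u ^ 2 + θ * b ^ 2 := by
  rw [← sub_nonneg]
  have : θ⁻¹ * u ^ 2 + θ * b ^ 2 - 2 * u * b = (u - θ * b) ^ 2 / θ := by
    field_simp
    ring
  rw [this]
  positivity

/-- conversion: sum of `aᵢ * ofReal rᵢ` with finite `aᵢ` equals `ofReal` of real sum. -/
lemma sum_mul_ofReal {ι : Type*} (s : Finset ι) (a : ι → ℝ≥0∞) (r : ι → ℝ)
    (ha : ∀ i ∈ s, a i ≠ ⊤) (hr : ∀ i ∈ s, 0 ≤ r i) :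
    ∑ i ∈ s, a i * ENNReal.ofReal (r i) = ENNReal.ofReal (∑ i ∈ s, (a i).toReal * r i) := by
  rw [ENNReal.ofReal_sum_of_nonneg (fun i hi => mul_nonneg ENNReal.toReal_nonneg (hr i hi))]
  refine Finset.sum_congr rfl (fun i hi => ?_)
  rw [ENNReal.ofReal_mul ENNReal.toReal_nonneg, ENNReal.ofReal_toReal (ha i hi)]

lemma pointwise_bound {E : Type*} [NormedAddCommGroup E] [InnerProductSpace ℝ E]
    {ι κ : Type*} (s : Finset ι) (t : Finset κ)
    (w : ι → ℝ) (pts : ι → E) (q : κ → ℝ) (zs : κ → E)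
    (hw1 : ∑ i ∈ s, w i = 1) (hq1 : ∑ z ∈ t, q z = 1) (hq0 : ∀ z ∈ t, 0 ≤ q z)
    (y : E) (θ : ℝ) (hθ : 0 < θ) :
    ∑ i ∈ s, ∑ z ∈ t, w i * q z * ‖pts i - zs z‖ ^ 2
      ≤ (∑ i ∈ s, w i * ‖pts i - y‖ ^ 2)
        + (θ⁻¹ * ‖(∑ j ∈ s, w j • pts j) - y‖ ^ 2 + θ * ∑ z ∈ t, q z * ‖y - zs z‖ ^ 2)
        + ∑ z ∈ t, q z * ‖y - zs z‖ ^ 2 := by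
  set m : E := ∑ j ∈ s, w j • pts j with hm
  set A : ℝ := ∑ i ∈ s, w i * ‖pts i - m‖ ^ 2 with hA
  set u : ℝ := ‖m - y‖ with hu
  set b : ℝ := ∑ z ∈ t, q z * ‖y - zs z‖ with hb
  set Q : ℝ := ∑ z ∈ t, q z * ‖y - zs z‖ ^ 2 with hQ
  have hKey : ∀ z : κ, ∑ i ∈ s, w i * ‖pts i - zs z‖ ^ 2 = A + ‖m - zs z‖ ^ 2 :=
    fun z => mean_identity s w pts hw1 (zs z)
  have hK : ∑ i ∈ s, w i * ‖pts i - y‖ ^ 2 = A + u ^ 2 := mean_identity s w pts hw1 y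
  have hbnn : 0 ≤ b := Finset.sum_nonneg (fun z hz => mul_nonneg (hq0 z hz) (norm_nonneg _))
  calc ∑ i ∈ s, ∑ z ∈ t, w i * q z * ‖pts i - zs z‖ ^ 2
      = ∑ z ∈ t, q z * (A + ‖m - zs z‖ ^ 2) := by
        rw [Finset.sum_comm]
        refine Finset.sum_congr rfl (fun z _ => ?_)
        rw [← hKey z, Finset.mul_sum]
        exact Finset.sum_congr rfl (fun i _ => by ring)
    _ ≤ ∑ z ∈ t, q z * (A + (u + ‖y - zs z‖) ^ 2) := by
        refine Finset.sum_le_sum (fun z hz => mul_le_mul_of_nonneg_left ?_ (hq0 z hz))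
        refine add_le_add_right (pow_le_pow_left₀ (norm_nonneg (m - zs z)) ?_ 2) A
        calc ‖m - zs z‖ ≤ ‖m - y‖ + ‖y - zs z‖ := norm_sub_le_norm_sub_add_norm_sub m y (zs z)
          _ = u + ‖y - zs z‖ := rfl
    _ = (A + u ^ 2) + 2 * u * b + Q := by
        have e : ∀ z ∈ t, q z * (A + (u + ‖y - zs z‖) ^ 2)
            = q z * (A + u ^ 2) + 2 * u * (q z * ‖y - zs z‖) + q z * ‖y - zs z‖ ^ 2 :=
          fun z _ => by ring
        rw [Finset.sum_congr rfl e, Finset.sum_add_distrib, Finset.sum_add_distrib,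
          ← Finset.sum_mul, hq1, one_mul, ← Finset.mul_sum, ← hb, ← hQ]
    _ ≤ (A + u ^ 2) + (θ⁻¹ * u ^ 2 + θ * Q) + Q := by
        have h1 : 2 * u * b ≤ θ⁻¹ * u ^ 2 + θ * b ^ 2 :=
          amgm_theta u b θ hθ (norm_nonneg _) hbnn
        have h2 : b ^ 2 ≤ Q := weighted_cs t q (fun z => ‖y - zs z‖) hq0 hq1
        nlinarith [hθ.le]
    _ = (∑ i ∈ s, w i * ‖pts i - y‖ ^ 2) + (θ⁻¹ * ‖m - y‖ ^ 2 + θ * Q) + Q := by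
        rw [hK, hu]


/-- If `ν̂` is an optimal barycenter, then for every finitely supported
probability measure `ν̃` we have `Ψ(ν̃) ≤ Ψ(ν̂) + W₂²(ν̃, ν̂)`. -/
theorem stmt9 {d N : ℕ} (μ : Fin N → Measure (Pt d))
    (hμ : ∀ i, IsProbabilityMeasure (μ i) ∧ FinitelySupported (μ i))
    (l : Fin N → ℝ) (hl : InSimplex l)
    (nuhat : Measure (Pt d)) (hν : IsProbabilityMeasure nuhat)
    (hopt : ∀ ν : Measure (Pt d), IsProbabilityMeasure ν → Psi l μ nuhat ≤ Psi l μ ν)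
    (nutil : Measure (Pt d)) (hν' : IsProbabilityMeasure nutil)
    (hfs : FinitelySupported nutil) :
    Psi l μ nutil ≤ Psi l μ nuhat + W2sq nutil nuhat := by
  classical
  obtain ⟨hlpos, hlsum⟩ := hl
  haveI := hν; haveI := hν'
  by_cases hPsiTop : Psi l μ nuhat = ⊤
  · rw [hPsiTop, top_add]; exact le_top
  by_cases hWtop : W2sq nutil nuhat = ⊤
  · rw [hWtop, add_top]; exact le_top
  have hl0 : ∀ i, ENNReal.ofReal (l i) ≠ 0 := fun i => (ENNReal.ofReal_pos.mpr (hlpos i)).ne'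
  have hlofsum : ∑ i, ENNReal.ofReal (l i) = 1 := by
    rw [← ENNReal.ofReal_sum_of_nonneg (fun i _ => (hlpos i).le), hlsum, ENNReal.ofReal_one]
  have hWi : ∀ i, W2sq (μ i) nuhat ≠ ⊤ := by
    intro i htop
    apply hPsiTop
    have hle : ENNReal.ofReal (l i) * W2sq (μ i) nuhat ≤ Psi l μ nuhat :=
      Finset.single_le_sum (f := fun j => ENNReal.ofReal (l j) * W2sq (μ j) nuhat)
        (fun _ _ => zero_le) (Finset.mem_univ i)
    rw [htop, ENNReal.mul_top (hl0 i)] at hle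
    exact top_le_iff.mp hle
  set S : Fin N → Finset (Pt d) := fun i => (hμ i).2.choose with hSdef
  have hS : ∀ i, μ i ((S i : Set (Pt d))ᶜ) = 0 := fun i => (hμ i).2.choose_spec
  obtain ⟨T, hT⟩ := hfs
  have W2sq_le : ∀ (ρ η : Measure (Pt d)) (π : Measure (Pt d × Pt d)), IsCoupling ρ η π →
      W2sq ρ η ≤ ∫⁻ p, ENNReal.ofReal (‖p.1 - p.2‖ ^ 2) ∂π :=
    fun ρ η π hπ => sInf_le ⟨π, hπ, rfl⟩
  have hcostmeas : Measurable (Function.uncurry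
      (fun a b : Pt d => ENNReal.ofReal (‖a - b‖ ^ 2))) := by
    apply Measurable.ennreal_ofReal
    exact (measurable_fst.sub measurable_snd).norm.pow_const 2
  have hcostmeas' : Measurable (fun p : Pt d × Pt d => ENNReal.ofReal (‖p.1 - p.2‖ ^ 2)) :=
    hcostmeas
  -- ================== the key quantitative bound ==================
  have key : ∀ ε θ : ℝ, 0 < ε → 0 < θ →
      Psi l μ nutil ≤ (Psi l μ nuhat + ENNReal.ofReal ε)
        + ((ENNReal.ofReal θ)⁻¹ * ENNReal.ofReal ε
            + ENNReal.ofReal θ * (W2sq nutil nuhat + ENNReal.ofReal ε))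
        + (W2sq nutil nuhat + ENNReal.ofReal ε) := by
    intro ε θ hε hθ
    have hεE0 : ENNReal.ofReal ε ≠ 0 := (ENNReal.ofReal_pos.mpr hε).ne'
    -- near-optimal couplings
    have hγex : ∀ i, ∃ γ, IsCoupling (μ i) nuhat γ ∧
        ∫⁻ p, ENNReal.ofReal (‖p.1 - p.2‖ ^ 2) ∂γ ≤ W2sq (μ i) nuhat + ENNReal.ofReal ε := by
      intro i
      have h1 : W2sq (μ i) nuhat < W2sq (μ i) nuhat + ENNReal.ofReal ε :=
        ENNReal.lt_add_right (hWi i) hεE0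
      conv at h1 => lhs; rw [W2sq]
      obtain ⟨c, hmem, hlt⟩ := sInf_lt_iff.mp h1
      obtain ⟨γ, hγ, rfl⟩ := hmem
      exact ⟨γ, hγ, hlt.le⟩
    choose γ hγc hγcost using hγex
    have hσex : ∃ σ, IsCoupling nutil nuhat σ ∧
        ∫⁻ p, ENNReal.ofReal (‖p.1 - p.2‖ ^ 2) ∂σ ≤ W2sq nutil nuhat + ENNReal.ofReal ε := by
      have h1 : W2sq nutil nuhat < W2sq nutil nuhat + ENNReal.ofReal ε :=
        ENNReal.lt_add_right hWtop hεE0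
      conv at h1 => lhs; rw [W2sq]
      obtain ⟨c, hmem, hlt⟩ := sInf_lt_iff.mp h1
      obtain ⟨σ, hσ, rfl⟩ := hmem
      exact ⟨σ, hσ, hlt.le⟩
    obtain ⟨σ, hσc, hσcost⟩ := hσex
    -- disintegration
    have hDis : ∀ i, ∃ f : Pt d → Pt d → ℝ≥0∞, (∀ x, Measurable (f x)) ∧
        (∀ᵐ y ∂nuhat, ∑ x ∈ S i, f x y = 1) ∧
        (∀ x, ∫⁻ y, f x y ∂nuhat = μ i {x}) ∧
        (∀ c : Pt d → Pt d → ℝ≥0∞, Measurable (Function.uncurry c) →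
          ∫⁻ p, c p.1 p.2 ∂(γ i) = ∫⁻ y, ∑ x ∈ S i, f x y * c x y ∂nuhat) :=
      fun i => coupling_disintegration nuhat (μ i) (S i) (hS i) (γ i) (hγc i)
    choose f hfmeas hfsum hfmass hfcost using hDis
    obtain ⟨g, hgmeas, hgsum, hgmass, hgcost⟩ :=
      coupling_disintegration nuhat nutil T hT σ hσc
    -- the barycentric map
    set M : Pt d → Pt d := fun y => ∑ i, ∑ x ∈ S i, (l i * (f i x y).toReal) • x with hMdef
    have hfm : ∀ i x, Measurable fun y => (f i x y).toReal :=
      fun i x => (hfmeas i x).ennreal_toReal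
    have hgm : ∀ z, Measurable fun y => (g z y).toReal :=
      fun z => (hgmeas z).ennreal_toReal
    have hMmeas : Measurable M := by
      apply Finset.measurable_sum
      intro i _
      apply Finset.measurable_sum
      intro x _
      exact ((hfm i x).const_mul (l i)).smul_const x
    -- real-valued integrands
    set K : Pt d → ℝ := fun y => ∑ i, l i * ∑ x ∈ S i, (f i x y).toReal * ‖x - y‖ ^ 2 with hKdef
    set A : Pt d → ℝ := fun y => ∑ i, l i * ∑ x ∈ S i, (f i x y).toReal * ‖x - M y‖ ^ 2 with hAdef
    set L : Pt d → ℝ := fun y => ∑ i, l i * ∑ x ∈ S i, (f i x y).toReal *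
      (∑ z ∈ T, (g z y).toReal * ‖x - z‖ ^ 2) with hLdef
    set u2 : Pt d → ℝ := fun y => ‖M y - y‖ ^ 2 with hu2def
    set wq : Pt d → ℝ := fun y => ∑ z ∈ T, (g z y).toReal * ‖y - z‖ ^ 2 with hwqdef
    -- measurability helpers
    have hnxy : ∀ x : Pt d, Measurable fun y : Pt d => ‖x - y‖ ^ 2 :=
      fun x => (measurable_const.sub measurable_id).norm.pow_const 2
    have hnyx : ∀ z : Pt d, Measurable fun y : Pt d => ‖y - z‖ ^ 2 :=
      fun z => (measurable_id.sub measurable_const).norm.pow_const 2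
    have hnxM : ∀ x : Pt d, Measurable fun y : Pt d => ‖x - M y‖ ^ 2 :=
      fun x => (measurable_const.sub hMmeas).norm.pow_const 2
    have hKm : Measurable fun y => ENNReal.ofReal (K y) := by
      apply Measurable.ennreal_ofReal
      exact Finset.measurable_sum _ (fun i _ => ((Finset.measurable_sum _
        (fun x _ => (hfm i x).mul (hnxy x))).const_mul (l i)))
    have hAm : Measurable fun y => ENNReal.ofReal (A y) := by
      apply Measurable.ennreal_ofReal
      exact Finset.measurable_sum _ (fun i _ => ((Finset.measurable_sum _
        (fun x _ => (hfm i x).mul (hnxM x))).const_mul (l i)))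
    have hu2m : Measurable fun y => ENNReal.ofReal (u2 y) := by
      apply Measurable.ennreal_ofReal
      exact (hMmeas.sub measurable_id).norm.pow_const 2
    have hwqm : Measurable fun y => ENNReal.ofReal (wq y) := by
      apply Measurable.ennreal_ofReal
      exact Finset.measurable_sum _ (fun z _ => (hgm z).mul (hnyx z))
    -- good points
    have hgood : ∀ᵐ y ∂nuhat, (∀ i, ∑ x ∈ S i, f i x y = 1) ∧ (∑ z ∈ T, g z y = 1) :=
      (ae_all_iff.mpr hfsum).and hgsum
    -- flattening helper
    have hflat : ∀ (y : Pt d) (h : Pt d → ℝ),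
        (∑ i, l i * ∑ x ∈ S i, (f i x y).toReal * h x)
          = ∑ p ∈ Finset.univ.sigma S, (l p.1 * (f p.1 p.2 y).toReal) * h p.2 := by
      intro y h
      rw [show (∑ i, l i * ∑ x ∈ S i, (f i x y).toReal * h x)
          = ∑ i, ∑ x ∈ S i, (l i * (f i x y).toReal) * h x from
        Finset.sum_congr rfl (fun i _ => by
          rw [Finset.mul_sum]; exact Finset.sum_congr rfl (fun x _ => by ring))]
      exact Finset.sum_sigma' Finset.univ S (fun i x => (l i * (f i x y).toReal) * h x)
    -- nonnegativity helpers
    have hKnn : ∀ y, 0 ≤ K y := fun y => Finset.sum_nonneg (fun i _ => mul_nonneg (hlpos i).le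
      (Finset.sum_nonneg (fun x _ => mul_nonneg ENNReal.toReal_nonneg (sq_nonneg _))))
    have hAnn : ∀ y, 0 ≤ A y := fun y => Finset.sum_nonneg (fun i _ => mul_nonneg (hlpos i).le
      (Finset.sum_nonneg (fun x _ => mul_nonneg ENNReal.toReal_nonneg (sq_nonneg _))))
    have hwqnn : ∀ y, 0 ≤ wq y := fun y =>
      Finset.sum_nonneg (fun z _ => mul_nonneg ENNReal.toReal_nonneg (sq_nonneg _))
    -- a.e. conversion facts
    have ae1 : ∀ᵐ y ∂nuhat, ∑ i, ENNReal.ofReal (l i)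
        * (∑ x ∈ S i, f i x y * ENNReal.ofReal (‖x - y‖ ^ 2)) = ENNReal.ofReal (K y) := by
      filter_upwards [hgood] with y hy
      obtain ⟨hy1, hy2⟩ := hy
      have hfne : ∀ i, ∀ x ∈ S i, f i x y ≠ ⊤ := fun i x hx =>
        ((Finset.single_le_sum (f := fun x => f i x y) (fun _ _ => zero_le) hx).trans_lt
          ((hy1 i).symm ▸ ENNReal.one_lt_top : ∑ x ∈ S i, f i x y < ⊤)).ne
      have inner : ∀ i, ∑ x ∈ S i, f i x y * ENNReal.ofReal (‖x - y‖ ^ 2)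
          = ENNReal.ofReal (∑ x ∈ S i, (f i x y).toReal * ‖x - y‖ ^ 2) := fun i =>
        sum_mul_ofReal _ _ _ (hfne i) (fun x _ => sq_nonneg _)
      rw [Finset.sum_congr rfl (fun i _ => by rw [inner i]),
        sum_mul_ofReal Finset.univ (fun i => ENNReal.ofReal (l i)) _
          (fun i _ => ENNReal.ofReal_ne_top)
          (fun i _ => Finset.sum_nonneg (fun x _ => mul_nonneg ENNReal.toReal_nonneg (sq_nonneg _)))]
      congr 1
      exact Finset.sum_congr rfl (fun i _ => by rw [ENNReal.toReal_ofReal (hlpos i).le])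
    have ae2 : ∀ᵐ y ∂nuhat, ∑ i, ENNReal.ofReal (l i)
        * (∑ x ∈ S i, f i x y * ENNReal.ofReal (‖x - M y‖ ^ 2)) = ENNReal.ofReal (A y) := by
      filter_upwards [hgood] with y hy
      obtain ⟨hy1, hy2⟩ := hy
      have hfne : ∀ i, ∀ x ∈ S i, f i x y ≠ ⊤ := fun i x hx =>
        ((Finset.single_le_sum (f := fun x => f i x y) (fun _ _ => zero_le) hx).trans_lt
          ((hy1 i).symm ▸ ENNReal.one_lt_top : ∑ x ∈ S i, f i x y < ⊤)).ne
      have inner : ∀ i, ∑ x ∈ S i, f i x y * ENNReal.ofReal (‖x - M y‖ ^ 2)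
          = ENNReal.ofReal (∑ x ∈ S i, (f i x y).toReal * ‖x - M y‖ ^ 2) := fun i =>
        sum_mul_ofReal _ _ _ (hfne i) (fun x _ => sq_nonneg _)
      rw [Finset.sum_congr rfl (fun i _ => by rw [inner i]),
        sum_mul_ofReal Finset.univ (fun i => ENNReal.ofReal (l i)) _
          (fun i _ => ENNReal.ofReal_ne_top)
          (fun i _ => Finset.sum_nonneg (fun x _ => mul_nonneg ENNReal.toReal_nonneg (sq_nonneg _)))]
      congr 1
      exact Finset.sum_congr rfl (fun i _ => by rw [ENNReal.toReal_ofReal (hlpos i).le])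
    have ae4 : ∀ᵐ y ∂nuhat, ∑ z ∈ T, g z y * ENNReal.ofReal (‖z - y‖ ^ 2)
        = ENNReal.ofReal (wq y) := by
      filter_upwards [hgood] with y hy
      obtain ⟨hy1, hy2⟩ := hy
      have hgne : ∀ z ∈ T, g z y ≠ ⊤ := fun z hz =>
        ((Finset.single_le_sum (f := fun z => g z y) (fun _ _ => zero_le) hz).trans_lt
          (hy2.symm ▸ ENNReal.one_lt_top : ∑ z ∈ T, g z y < ⊤)).ne
      rw [sum_mul_ofReal _ _ _ hgne (fun z _ => sq_nonneg _)]
      congr 1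
      exact Finset.sum_congr rfl (fun z _ => by rw [norm_sub_rev])
    have ae3 : ∀ᵐ y ∂nuhat, ∑ i, ENNReal.ofReal (l i)
        * (∑ x ∈ S i, ∑ z ∈ T, f i x y * g z y * ENNReal.ofReal (‖x - z‖ ^ 2))
          = ENNReal.ofReal (L y) := by
      filter_upwards [hgood] with y hy
      obtain ⟨hy1, hy2⟩ := hy
      have hfne : ∀ i, ∀ x ∈ S i, f i x y ≠ ⊤ := fun i x hx =>
        ((Finset.single_le_sum (f := fun x => f i x y) (fun _ _ => zero_le) hx).trans_lt
          ((hy1 i).symm ▸ ENNReal.one_lt_top : ∑ x ∈ S i, f i x y < ⊤)).ne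
      have hgne : ∀ z ∈ T, g z y ≠ ⊤ := fun z hz =>
        ((Finset.single_le_sum (f := fun z => g z y) (fun _ _ => zero_le) hz).trans_lt
          (hy2.symm ▸ ENNReal.one_lt_top : ∑ z ∈ T, g z y < ⊤)).ne
      have inner2 : ∀ i, ∀ x ∈ S i, ∑ z ∈ T, f i x y * g z y * ENNReal.ofReal (‖x - z‖ ^ 2)
          = ENNReal.ofReal ((f i x y).toReal * ∑ z ∈ T, (g z y).toReal * ‖x - z‖ ^ 2) := by
        intro i x hx
        rw [sum_mul_ofReal T (fun z => f i x y * g z y) _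
          (fun z hz => ENNReal.mul_ne_top (hfne i x hx) (hgne z hz)) (fun z _ => sq_nonneg _)]
        congr 1
        rw [Finset.mul_sum]
        exact Finset.sum_congr rfl (fun z _ => by rw [ENNReal.toReal_mul]; ring)
      have inner1 : ∀ i, ∑ x ∈ S i, ∑ z ∈ T, f i x y * g z y * ENNReal.ofReal (‖x - z‖ ^ 2)
          = ENNReal.ofReal (∑ x ∈ S i, (f i x y).toReal
              * ∑ z ∈ T, (g z y).toReal * ‖x - z‖ ^ 2) := by
        intro i
        rw [Finset.sum_congr rfl (inner2 i), ← ENNReal.ofReal_sum_of_nonneg]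
        intro x _
        exact mul_nonneg ENNReal.toReal_nonneg (Finset.sum_nonneg
          (fun z _ => mul_nonneg ENNReal.toReal_nonneg (sq_nonneg _)))
      rw [Finset.sum_congr rfl (fun i _ => by rw [inner1 i]),
        sum_mul_ofReal Finset.univ (fun i => ENNReal.ofReal (l i)) _
          (fun i _ => ENNReal.ofReal_ne_top)
          (fun i _ => Finset.sum_nonneg (fun x _ => mul_nonneg ENNReal.toReal_nonneg
            (Finset.sum_nonneg (fun z _ => mul_nonneg ENNReal.toReal_nonneg (sq_nonneg _)))))]
      congr 1
      exact Finset.sum_congr rfl (fun i _ => by rw [ENNReal.toReal_ofReal (hlpos i).le])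
    -- a.e. identity A + u2 = K  and  pointwise bound for L
    have ae5 : ∀ᵐ y ∂nuhat,
        ENNReal.ofReal (A y) + ENNReal.ofReal (u2 y) = ENNReal.ofReal (K y) := by
      filter_upwards [hgood] with y hy
      obtain ⟨hy1, hy2⟩ := hy
      have hfne : ∀ i, ∀ x ∈ S i, f i x y ≠ ⊤ := fun i x hx =>
        ((Finset.single_le_sum (f := fun x => f i x y) (fun _ _ => zero_le) hx).trans_lt
          ((hy1 i).symm ▸ ENNReal.one_lt_top : ∑ x ∈ S i, f i x y < ⊤)).ne
      have hw1 : ∑ p ∈ Finset.univ.sigma S, l p.1 * (f p.1 p.2 y).toReal = 1 := by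
        rw [show (∑ p ∈ Finset.univ.sigma S, l p.1 * (f p.1 p.2 y).toReal)
            = ∑ i, ∑ x ∈ S i, l i * (f i x y).toReal from
          (Finset.sum_sigma' Finset.univ S (fun i x => l i * (f i x y).toReal)).symm]
        have : ∀ i ∈ Finset.univ, ∑ x ∈ S i, l i * (f i x y).toReal = l i := by
          intro i _
          rw [← Finset.mul_sum, ← ENNReal.toReal_sum (hfne i), hy1 i, ENNReal.toReal_one, mul_one]
        rw [Finset.sum_congr rfl this, hlsum]
      have hmean := mean_identity (Finset.univ.sigma S)
        (fun p => l p.1 * (f p.1 p.2 y).toReal) (fun p => p.2) hw1 y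
      have hMy : (∑ p ∈ Finset.univ.sigma S, (l p.1 * (f p.1 p.2 y).toReal) • p.2) = M y := by
        rw [show M y = ∑ i, ∑ x ∈ S i, (l i * (f i x y).toReal) • x from rfl,
          Finset.sum_sigma']
      have hreal : A y + u2 y = K y := by
        rw [show K y = ∑ i, l i * ∑ x ∈ S i, (f i x y).toReal * ‖x - y‖ ^ 2 from rfl,
          show A y = ∑ i, l i * ∑ x ∈ S i, (f i x y).toReal * ‖x - M y‖ ^ 2 from rfl,
          show u2 y = ‖M y - y‖ ^ 2 from rfl,
          hflat y (fun x => ‖x - y‖ ^ 2), hflat y (fun x => ‖x - M y‖ ^ 2)]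
        rw [hmean, hMy]
      rw [← ENNReal.ofReal_add (hAnn y) (sq_nonneg _), hreal]
    have ae6 : ∀ᵐ y ∂nuhat, ENNReal.ofReal (L y)
        ≤ ENNReal.ofReal (K y) + ((ENNReal.ofReal θ)⁻¹ * ENNReal.ofReal (u2 y)
          + ENNReal.ofReal θ * ENNReal.ofReal (wq y)) + ENNReal.ofReal (wq y) := by
      filter_upwards [hgood] with y hy
      obtain ⟨hy1, hy2⟩ := hy
      have hfne : ∀ i, ∀ x ∈ S i, f i x y ≠ ⊤ := fun i x hx =>
        ((Finset.single_le_sum (f := fun x => f i x y) (fun _ _ => zero_le) hx).trans_lt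
          ((hy1 i).symm ▸ ENNReal.one_lt_top : ∑ x ∈ S i, f i x y < ⊤)).ne
      have hgne : ∀ z ∈ T, g z y ≠ ⊤ := fun z hz =>
        ((Finset.single_le_sum (f := fun z => g z y) (fun _ _ => zero_le) hz).trans_lt
          (hy2.symm ▸ ENNReal.one_lt_top : ∑ z ∈ T, g z y < ⊤)).ne
      have hw1 : ∑ p ∈ Finset.univ.sigma S, l p.1 * (f p.1 p.2 y).toReal = 1 := by
        rw [show (∑ p ∈ Finset.univ.sigma S, l p.1 * (f p.1 p.2 y).toReal)
            = ∑ i, ∑ x ∈ S i, l i * (f i x y).toReal from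
          (Finset.sum_sigma' Finset.univ S (fun i x => l i * (f i x y).toReal)).symm]
        have : ∀ i ∈ Finset.univ, ∑ x ∈ S i, l i * (f i x y).toReal = l i := by
          intro i _
          rw [← Finset.mul_sum, ← ENNReal.toReal_sum (hfne i), hy1 i, ENNReal.toReal_one, mul_one]
        rw [Finset.sum_congr rfl this, hlsum]
      have hq1 : ∑ z ∈ T, (g z y).toReal = 1 := by
        rw [← ENNReal.toReal_sum hgne, hy2, ENNReal.toReal_one]
      have hq0 : ∀ z ∈ T, (0:ℝ) ≤ (g z y).toReal := fun z _ => ENNReal.toReal_nonneg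
      have hpb := pointwise_bound (Finset.univ.sigma S) T
        (fun p => l p.1 * (f p.1 p.2 y).toReal) (fun p => p.2)
        (fun z => (g z y).toReal) (fun z => z) hw1 hq1 hq0 y θ hθ
      have hMy : (∑ p ∈ Finset.univ.sigma S, (l p.1 * (f p.1 p.2 y).toReal) • p.2) = M y := by
        rw [show M y = ∑ i, ∑ x ∈ S i, (l i * (f i x y).toReal) • x from rfl,
          Finset.sum_sigma']
      have hLflat : L y = ∑ p ∈ Finset.univ.sigma S, ∑ z ∈ T,
          (l p.1 * (f p.1 p.2 y).toReal) * (g z y).toReal * ‖p.2 - z‖ ^ 2 := by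
        rw [show L y = ∑ i, l i * ∑ x ∈ S i, (f i x y).toReal
            * (∑ z ∈ T, (g z y).toReal * ‖x - z‖ ^ 2) from rfl,
          hflat y (fun x => ∑ z ∈ T, (g z y).toReal * ‖x - z‖ ^ 2)]
        refine Finset.sum_congr rfl (fun p _ => ?_)
        rw [Finset.mul_sum]
        exact Finset.sum_congr rfl (fun z _ => by ring)
      have hKflat : (∑ p ∈ Finset.univ.sigma S, (l p.1 * (f p.1 p.2 y).toReal)
          * ‖p.2 - y‖ ^ 2) = K y := (hflat y (fun x => ‖x - y‖ ^ 2)).symm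
      rw [hMy, hKflat] at hpb
      have hreal : L y ≤ K y + (θ⁻¹ * u2 y + θ * wq y) + wq y := by
        rw [hLflat]
        exact hpb
      calc ENNReal.ofReal (L y)
          ≤ ENNReal.ofReal (K y + (θ⁻¹ * u2 y + θ * wq y) + wq y) :=
            ENNReal.ofReal_le_ofReal hreal
        _ = ENNReal.ofReal (K y) + ((ENNReal.ofReal θ)⁻¹ * ENNReal.ofReal (u2 y)
            + ENNReal.ofReal θ * ENNReal.ofReal (wq y)) + ENNReal.ofReal (wq y) := by
            have h3 : 0 ≤ θ⁻¹ * u2 y := mul_nonneg (inv_nonneg.mpr hθ.le) (sq_nonneg (‖M y - y‖))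
            have h4 : 0 ≤ θ * wq y := mul_nonneg hθ.le (hwqnn y)
            rw [ENNReal.ofReal_add (add_nonneg (hKnn y) (add_nonneg h3 h4)) (hwqnn y),
              ENNReal.ofReal_add (hKnn y) (add_nonneg h3 h4),
              ENNReal.ofReal_add h3 h4,
              ENNReal.ofReal_mul (inv_nonneg.mpr hθ.le), ENNReal.ofReal_mul hθ.le,
              ENNReal.ofReal_inv_of_pos hθ]
    -- integral quantities
    set IK : ℝ≥0∞ := ∫⁻ y, ENNReal.ofReal (K y) ∂nuhat with hIKdef
    set IA : ℝ≥0∞ := ∫⁻ y, ENNReal.ofReal (A y) ∂nuhat with hIAdef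
    set DD : ℝ≥0∞ := ∫⁻ y, ENNReal.ofReal (u2 y) ∂nuhat with hDDdef
    set Iw : ℝ≥0∞ := ∫⁻ y, ENNReal.ofReal (wq y) ∂nuhat with hIwdef
    set IL : ℝ≥0∞ := ∫⁻ y, ENNReal.ofReal (L y) ∂nuhat with hILdef
    have hPsidef : ∀ ν : Measure (Pt d),
        Psi l μ ν = ∑ i, ENNReal.ofReal (l i) * W2sq (μ i) ν := fun _ => rfl
    -- (1) IK as weighted sum of γ-costs
    have hGγm : ∀ i, Measurable fun y => ∑ x ∈ S i, f i x y * ENNReal.ofReal (‖x - y‖ ^ 2) :=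
      fun i => Finset.measurable_sum _ (fun x _ => (hfmeas i x).mul ((hnxy x).ennreal_ofReal))
    have hIKeq : ∑ i, ENNReal.ofReal (l i)
        * (∫⁻ p, ENNReal.ofReal (‖p.1 - p.2‖ ^ 2) ∂(γ i)) = IK := by
      have e1 : ∀ i ∈ Finset.univ, ENNReal.ofReal (l i)
          * (∫⁻ p, ENNReal.ofReal (‖p.1 - p.2‖ ^ 2) ∂(γ i))
          = ∫⁻ y, ENNReal.ofReal (l i)
            * ∑ x ∈ S i, f i x y * ENNReal.ofReal (‖x - y‖ ^ 2) ∂nuhat := by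
        intro i _
        rw [hfcost i (fun a b => ENNReal.ofReal (‖a - b‖ ^ 2)) hcostmeas,
          lintegral_const_mul _ (hGγm i)]
      rw [Finset.sum_congr rfl e1, ← lintegral_finset_sum _
        (fun i _ => (hGγm i).const_mul _), hIKdef]
      exact lintegral_congr_ae ae1
    have hIKle : IK ≤ Psi l μ nuhat + ENNReal.ofReal ε := by
      rw [← hIKeq, hPsidef]
      calc ∑ i, ENNReal.ofReal (l i) * (∫⁻ p, ENNReal.ofReal (‖p.1 - p.2‖ ^ 2) ∂(γ i))
          ≤ ∑ i, ENNReal.ofReal (l i) * (W2sq (μ i) nuhat + ENNReal.ofReal ε) :=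
            Finset.sum_le_sum (fun i _ => mul_le_mul_right (hγcost i) _)
        _ = (∑ i, ENNReal.ofReal (l i) * W2sq (μ i) nuhat)
            + (∑ i, ENNReal.ofReal (l i)) * ENNReal.ofReal ε := by
            rw [Finset.sum_mul]
            rw [← Finset.sum_add_distrib]
            exact Finset.sum_congr rfl (fun i _ => mul_add _ _ _)
        _ = (∑ i, ENNReal.ofReal (l i) * W2sq (μ i) nuhat) + ENNReal.ofReal ε := by
            rw [hlofsum, one_mul]
    -- (2) the pushforward coupling and  Psi nuhat ≤ IA
    haveI : IsProbabilityMeasure (nuhat.map M) := Measure.isProbabilityMeasure_map hMmeas.aemeasurable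
    have hτ : ∀ i, IsCoupling (μ i) (nuhat.map M)
        (∑ x ∈ S i, (nuhat.withDensity (f i x)).map (fun y => (x, M y))) ∧
        (∀ c : Pt d × Pt d → ℝ≥0∞, Measurable c →
          ∫⁻ p, c p ∂(∑ x ∈ S i, (nuhat.withDensity (f i x)).map (fun y => (x, M y)))
            = ∫⁻ y, ∑ x ∈ S i, f i x y * c (x, M y) ∂nuhat) := by
      intro i
      haveI := (hμ i).1
      exact coupling_pushforward nuhat (μ i) (S i) (hS i) (f i) (hfmeas i) (hfsum i)
        (hfmass i) M hMmeas
    have hGτm : ∀ i, Measurable fun y => ∑ x ∈ S i, f i x y * ENNReal.ofReal (‖x - M y‖ ^ 2) :=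
      fun i => Finset.measurable_sum _ (fun x _ => (hfmeas i x).mul ((hnxM x).ennreal_ofReal))
    have hPsiA : Psi l μ (nuhat.map M) ≤ IA := by
      rw [hPsidef]
      calc ∑ i, ENNReal.ofReal (l i) * W2sq (μ i) (nuhat.map M)
          ≤ ∑ i, ENNReal.ofReal (l i) * ∫⁻ y, ∑ x ∈ S i, f i x y
              * ENNReal.ofReal (‖x - M y‖ ^ 2) ∂nuhat := by
            refine Finset.sum_le_sum (fun i _ => mul_le_mul_right ?_ _)
            refine (W2sq_le _ _ _ (hτ i).1).trans ?_
            rw [(hτ i).2 (fun p => ENNReal.ofReal (‖p.1 - p.2‖ ^ 2)) hcostmeas']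
        _ = IA := by
            have e1 : ∀ i ∈ Finset.univ, ENNReal.ofReal (l i) * ∫⁻ y, ∑ x ∈ S i, f i x y
                * ENNReal.ofReal (‖x - M y‖ ^ 2) ∂nuhat
                = ∫⁻ y, ENNReal.ofReal (l i) * ∑ x ∈ S i, f i x y
                  * ENNReal.ofReal (‖x - M y‖ ^ 2) ∂nuhat := by
              intro i _
              rw [lintegral_const_mul _ (hGτm i)]
            rw [Finset.sum_congr rfl e1, ← lintegral_finset_sum _
              (fun i _ => (hGτm i).const_mul _), hIAdef]
            exact lintegral_congr_ae ae2
    have hPsihatIA : Psi l μ nuhat ≤ IA := (hopt _ inferInstance).trans hPsiA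
    -- (3)(4) D ≤ ε
    have hIAD : IA + DD = IK := by
      rw [hIAdef, hDDdef, hIKdef, ← lintegral_add_left hAm]
      exact lintegral_congr_ae ae5
    have hDle : DD ≤ ENNReal.ofReal ε := by
      have h1 : Psi l μ nuhat + DD ≤ Psi l μ nuhat + ENNReal.ofReal ε := by
        calc Psi l μ nuhat + DD ≤ IA + DD := add_le_add_left hPsihatIA DD
          _ = IK := hIAD
          _ ≤ Psi l μ nuhat + ENNReal.ofReal ε := hIKle
      exact (ENNReal.add_le_add_iff_left hPsiTop).mp h1
    -- (5) Iw ≤ W + ε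
    have hIwle : Iw ≤ W2sq nutil nuhat + ENNReal.ofReal ε := by
      have e1 : ∫⁻ p, ENNReal.ofReal (‖p.1 - p.2‖ ^ 2) ∂σ = Iw := by
        rw [hgcost (fun a b => ENNReal.ofReal (‖a - b‖ ^ 2)) hcostmeas, hIwdef]
        exact lintegral_congr_ae ae4
      rw [← e1]
      exact hσcost
    -- (6) the product coupling and  Psi nutil ≤ IL
    have hβ : ∀ i, IsCoupling (μ i) nutil
        (∑ x ∈ S i, ∑ z ∈ T, (∫⁻ y, f i x y * g z y ∂nuhat) • Measure.dirac ((x, z) : Pt d × Pt d)) ∧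
        (∀ c : Pt d × Pt d → ℝ≥0∞, Measurable c →
          ∫⁻ p, c p ∂(∑ x ∈ S i, ∑ z ∈ T,
              (∫⁻ y, f i x y * g z y ∂nuhat) • Measure.dirac ((x, z) : Pt d × Pt d))
            = ∫⁻ y, ∑ x ∈ S i, ∑ z ∈ T, f i x y * g z y * c (x, z) ∂nuhat) := by
      intro i
      haveI := (hμ i).1
      exact coupling_pairs nuhat (μ i) nutil (S i) T (hS i) hT (f i) g (hfmeas i) hgmeas
        (hfsum i) hgsum (hfmass i) hgmass
    have hGβm : ∀ i, Measurable fun y => ∑ x ∈ S i, ∑ z ∈ T,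
        f i x y * g z y * ENNReal.ofReal (‖x - z‖ ^ 2) :=
      fun i => Finset.measurable_sum _ (fun x _ => Finset.measurable_sum _
        (fun z _ => ((hfmeas i x).mul (hgmeas z)).mul_const _))
    have hPsiL : Psi l μ nutil ≤ IL := by
      rw [hPsidef]
      calc ∑ i, ENNReal.ofReal (l i) * W2sq (μ i) nutil
          ≤ ∑ i, ENNReal.ofReal (l i) * ∫⁻ y, ∑ x ∈ S i, ∑ z ∈ T, f i x y * g z y
              * ENNReal.ofReal (‖x - z‖ ^ 2) ∂nuhat := by
            refine Finset.sum_le_sum (fun i _ => mul_le_mul_right ?_ _)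
            refine (W2sq_le _ _ _ (hβ i).1).trans ?_
            rw [(hβ i).2 (fun p => ENNReal.ofReal (‖p.1 - p.2‖ ^ 2)) hcostmeas']
        _ = IL := by
            have e1 : ∀ i ∈ Finset.univ, ENNReal.ofReal (l i) * ∫⁻ y, ∑ x ∈ S i, ∑ z ∈ T,
                f i x y * g z y * ENNReal.ofReal (‖x - z‖ ^ 2) ∂nuhat
                = ∫⁻ y, ENNReal.ofReal (l i) * ∑ x ∈ S i, ∑ z ∈ T, f i x y * g z y
                  * ENNReal.ofReal (‖x - z‖ ^ 2) ∂nuhat := by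
              intro i _
              rw [lintegral_const_mul _ (hGβm i)]
            rw [Finset.sum_congr rfl e1, ← lintegral_finset_sum _
              (fun i _ => (hGβm i).const_mul _), hILdef]
            exact lintegral_congr_ae ae3
    -- (7) splitting the integral of the pointwise bound
    have hILle : IL ≤ IK + ((ENNReal.ofReal θ)⁻¹ * DD + ENNReal.ofReal θ * Iw) + Iw := by
      calc IL ≤ ∫⁻ y, ENNReal.ofReal (K y) + ((ENNReal.ofReal θ)⁻¹ * ENNReal.ofReal (u2 y)
            + ENNReal.ofReal θ * ENNReal.ofReal (wq y)) + ENNReal.ofReal (wq y) ∂nuhat :=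
            lintegral_mono_ae ae6
        _ = IK + ((ENNReal.ofReal θ)⁻¹ * DD + ENNReal.ofReal θ * Iw) + Iw := by
            rw [lintegral_add_left (f := fun y => ENNReal.ofReal (K y) + ((ENNReal.ofReal θ)⁻¹ * ENNReal.ofReal (u2 y)
                + ENNReal.ofReal θ * ENNReal.ofReal (wq y))) (hKm.add ((hu2m.const_mul _).add (hwqm.const_mul _))),
              lintegral_add_left hKm, lintegral_add_left (hu2m.const_mul _),
              lintegral_const_mul _ hu2m, lintegral_const_mul _ hwqm]
    -- conclusion
    calc Psi l μ nutil ≤ IL := hPsiL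
      _ ≤ IK + ((ENNReal.ofReal θ)⁻¹ * DD + ENNReal.ofReal θ * Iw) + Iw := hILle
      _ ≤ (Psi l μ nuhat + ENNReal.ofReal ε)
          + ((ENNReal.ofReal θ)⁻¹ * ENNReal.ofReal ε
              + ENNReal.ofReal θ * (W2sq nutil nuhat + ENNReal.ofReal ε))
          + (W2sq nutil nuhat + ENNReal.ofReal ε) := by
          gcongr
  -- ================== limit in ε and θ ==================
  have step1 : ∀ θE : ℝ≥0∞, θE ≠ 0 → θE ≠ ⊤ →
      Psi l μ nutil ≤ Psi l μ nuhat + W2sq nutil nuhat + θE * (W2sq nutil nuhat + 1) := by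
    intro θE hθ0 hθtop
    apply ENNReal.le_of_forall_pos_le_add
    intro δ hδ _
    set c : ℝ≥0∞ := 2 + θE⁻¹ with hcdef
    have hc0 : c ≠ 0 := by simp [hcdef]
    have hctop : c ≠ ⊤ := by
      simp only [hcdef]
      exact ENNReal.add_ne_top.mpr ⟨by norm_num, ENNReal.inv_ne_top.mpr hθ0⟩
    set εE : ℝ≥0∞ := min 1 ((δ : ℝ≥0∞) * c⁻¹) with hεEdef
    have hεE0 : εE ≠ 0 := by
      refine (lt_min one_pos ?_).ne'
      exact ENNReal.mul_pos (by exact_mod_cast hδ.ne') (ENNReal.inv_ne_zero.mpr hctop)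
    have hεEtop : εE ≠ ⊤ := by
      simp [hεEdef]
    have hεE1 : εE ≤ 1 := min_le_left _ _
    have hεEδ : c * εE ≤ δ := by
      calc c * εE ≤ c * ((δ : ℝ≥0∞) * c⁻¹) := mul_le_mul_right (min_le_right _ _) c
        _ = (δ : ℝ≥0∞) * (c * c⁻¹) := by ring
        _ = δ := by rw [ENNReal.mul_inv_cancel hc0 hctop, mul_one]
    have hθr : 0 < θE.toReal := ENNReal.toReal_pos hθ0 hθtop
    have hεr : 0 < εE.toReal := ENNReal.toReal_pos hεE0 hεEtop
    have hkey := key εE.toReal θE.toReal hεr hθr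
    rw [ENNReal.ofReal_toReal hεEtop, ENNReal.ofReal_toReal hθtop] at hkey
    refine hkey.trans ?_
    have hW1 : W2sq nutil nuhat + εE ≤ W2sq nutil nuhat + 1 := add_le_add_right hεE1 _
    calc (Psi l μ nuhat + εE) + (θE⁻¹ * εE + θE * (W2sq nutil nuhat + εE))
          + (W2sq nutil nuhat + εE)
        ≤ (Psi l μ nuhat + εE) + (θE⁻¹ * εE + θE * (W2sq nutil nuhat + 1))
          + (W2sq nutil nuhat + εE) := by
          gcongr
      _ = Psi l μ nuhat + W2sq nutil nuhat + θE * (W2sq nutil nuhat + 1)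
          + ((2 + θE⁻¹) * εE) := by ring
      _ ≤ Psi l μ nuhat + W2sq nutil nuhat + θE * (W2sq nutil nuhat + 1) + δ := by
          exact add_le_add_right hεEδ _
  apply ENNReal.le_of_forall_pos_le_add
  intro δ hδ _
  have hW1top : W2sq nutil nuhat + 1 ≠ ⊤ := ENNReal.add_ne_top.mpr ⟨hWtop, ENNReal.one_ne_top⟩
  have hW10 : W2sq nutil nuhat + 1 ≠ 0 := by
    intro h
    have : (1 : ℝ≥0∞) ≤ 0 := h ▸ le_add_self
    simp at this
  set θE : ℝ≥0∞ := (δ : ℝ≥0∞) * (W2sq nutil nuhat + 1)⁻¹ with hθEdef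
  have hθE0 : θE ≠ 0 := by
    simp only [hθEdef, ne_eq, mul_eq_zero, not_or]
    exact ⟨by exact_mod_cast hδ.ne', ENNReal.inv_ne_zero.mpr hW1top⟩
  have hθEtop : θE ≠ ⊤ := ENNReal.mul_ne_top ENNReal.coe_ne_top (ENNReal.inv_ne_top.mpr hW10)
  have := step1 θE hθE0 hθEtop
  refine this.trans ?_
  have : θE * (W2sq nutil nuhat + 1) = δ := by
    rw [hθEdef, mul_assoc, ENNReal.inv_mul_cancel hW10 hW1top, mul_one]
  rw [this]
end
end

section
/- Let π̃ ∈ Π(μ¹,…,μ^N) be a multi-marginal plan satisfying ∫ ‖x₁ − x_i‖² dπ̃ = W₂²(μ¹, μ^i) for all i = 2,…,N (as is the case for any plan produced by the reference iteration). Then Φ(π̃) ≤ Σ_{i=2}^N λ_i W₂²(μ¹, μ^i), and consequently Φ(π̃) ≤ (1/λ₁) · Φ(π̂) for every optimal plan π̂ minimizing Φ over Π(μ¹,…,μ^N). -/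
open MeasureTheory
open scoped ENNReal

noncomputable section

lemma pointwise_key {d N : ℕ} (l : Fin N → ℝ) (hsum : ∑ i, l i = 1)
    (x : Fin N → Pt d) (i0 : Fin N) :
    ∑ s : Fin N, ∑ t : Fin N, (if s < t then l s * l t * ‖x s - x t‖ ^ 2 else 0)
      ≤ ∑ t, l t * ‖x t - x i0‖ ^ 2 := by
  set y : Fin N → Pt d := fun t => x t - x i0 with hy
  have hnorm : ∀ s t : Fin N, ‖x s - x t‖ = ‖y s - y t‖ := by
    intro s t; simp [hy, sub_sub_sub_cancel_right]
  set a : Fin N → Fin N → ℝ := fun s t => l s * l t * ‖y s - y t‖ ^ 2 with ha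
  have hsymm : ∀ s t, a s t = a t s := by
    intro s t
    show l s * l t * ‖y s - y t‖ ^ 2 = l t * l s * ‖y t - y s‖ ^ 2
    rw [norm_sub_rev]; ring
  have hdiag : ∀ s, a s s = 0 := by intro s; simp [ha]
  have hz : ‖∑ t, l t • y t‖ ^ 2
      = ∑ s : Fin N, ∑ t : Fin N, l s * l t * (inner ℝ (y s) (y t) : ℝ) := by
    rw [← real_inner_self_eq_norm_sq, sum_inner]
    refine Finset.sum_congr rfl fun s _ => ?_
    rw [real_inner_smul_left, inner_sum, Finset.mul_sum]
    refine Finset.sum_congr rfl fun t _ => ?_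
    rw [real_inner_smul_right]; ring
  have hfull : ∑ s : Fin N, ∑ t : Fin N, a s t
      = 2 * (∑ t, l t * ‖y t‖ ^ 2) - 2 * ‖∑ t, l t • y t‖ ^ 2 := by
    have expand : ∀ s t : Fin N, a s t
        = l s * l t * ‖y s‖ ^ 2 - 2 * (l s * l t * (inner ℝ (y s) (y t) : ℝ))
          + l s * l t * ‖y t‖ ^ 2 := by
      intro s t
      have := @norm_sub_sq_real _ _ _ (y s) (y t)
      simp only [ha]; rw [this]; ring
    have h1 : ∑ s : Fin N, ∑ t : Fin N, l s * l t * ‖y s‖ ^ 2 = ∑ s, l s * ‖y s‖ ^ 2 := by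
      refine Finset.sum_congr rfl fun s _ => ?_
      calc ∑ t, l s * l t * ‖y s‖ ^ 2 = (l s * ‖y s‖ ^ 2) * ∑ t, l t := by
            rw [Finset.mul_sum]; exact Finset.sum_congr rfl fun t _ => by ring
        _ = l s * ‖y s‖ ^ 2 := by rw [hsum, mul_one]
    have h2 : ∑ s : Fin N, ∑ t : Fin N, l s * l t * ‖y t‖ ^ 2 = ∑ t, l t * ‖y t‖ ^ 2 := by
      rw [Finset.sum_comm]
      refine Finset.sum_congr rfl fun t _ => ?_
      calc ∑ s, l s * l t * ‖y t‖ ^ 2 = (l t * ‖y t‖ ^ 2) * ∑ s, l s := by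
            rw [Finset.mul_sum]; exact Finset.sum_congr rfl fun s _ => by ring
        _ = l t * ‖y t‖ ^ 2 := by rw [hsum, mul_one]
    calc ∑ s : Fin N, ∑ t : Fin N, a s t
        = ∑ s : Fin N, ∑ t : Fin N, (l s * l t * ‖y s‖ ^ 2
            - 2 * (l s * l t * (inner ℝ (y s) (y t) : ℝ)) + l s * l t * ‖y t‖ ^ 2) := by
          exact Finset.sum_congr rfl fun s _ => Finset.sum_congr rfl fun t _ => expand s t
      _ = (∑ s : Fin N, ∑ t : Fin N, l s * l t * ‖y s‖ ^ 2)
            - 2 * (∑ s : Fin N, ∑ t : Fin N, l s * l t * (inner ℝ (y s) (y t) : ℝ))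
            + ∑ s : Fin N, ∑ t : Fin N, l s * l t * ‖y t‖ ^ 2 := by
          simp [Finset.sum_add_distrib, Finset.sum_sub_distrib, Finset.mul_sum]
      _ = 2 * (∑ t, l t * ‖y t‖ ^ 2) - 2 * ‖∑ t, l t • y t‖ ^ 2 := by
          rw [h1, h2, hz]; ring
  have htwice : (∑ s : Fin N, ∑ t : Fin N, (if s < t then a s t else 0))
      + (∑ s : Fin N, ∑ t : Fin N, (if s < t then a s t else 0))
      = ∑ s : Fin N, ∑ t : Fin N, a s t := by
    nth_rewrite 2 [show (∑ s : Fin N, ∑ t : Fin N, (if s < t then a s t else 0))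
        = ∑ s : Fin N, ∑ t : Fin N, (if t < s then a s t else 0) from by
      rw [Finset.sum_comm]
      exact Finset.sum_congr rfl fun s _ => Finset.sum_congr rfl fun t _ => by
        rw [hsymm]]
    rw [← Finset.sum_add_distrib]
    refine Finset.sum_congr rfl fun s _ => ?_
    rw [← Finset.sum_add_distrib]
    refine Finset.sum_congr rfl fun t _ => ?_
    rcases lt_trichotomy s t with h | h | h
    · rw [if_pos h, if_neg (asymm h), add_zero]
    · subst h; rw [if_neg (lt_irrefl s), hdiag, add_zero]
    · rw [if_neg (asymm h), if_pos h, zero_add]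
  have hLHS : (∑ s : Fin N, ∑ t : Fin N, (if s < t then l s * l t * ‖x s - x t‖ ^ 2 else 0))
      = ∑ s : Fin N, ∑ t : Fin N, (if s < t then a s t else 0) := by
    refine Finset.sum_congr rfl fun s _ => Finset.sum_congr rfl fun t _ => ?_
    rw [hnorm]
  have hRHS : (∑ t, l t * ‖x t - x i0‖ ^ 2) = ∑ t, l t * ‖y t‖ ^ 2 := rfl
  rw [hLHS, hRHS]
  nlinarith [sq_nonneg ‖∑ t, l t • y t‖, htwice, hfull]

/-- If `π̃ ∈ Π(μ¹,…,μ^N)` satisfies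
`∫ ‖x₁ − x_i‖² dπ̃ = W₂²(μ¹, μ^i)` for all `i ≠ 1`, then
`Φ(π̃) ≤ Σ_{i≥2} λ_i W₂²(μ¹, μ^i)` and `Φ(π̃) ≤ (1/λ₁) Φ(π̂)` for every optimal `π̂`. -/
theorem stmt11 {d N : ℕ} (hN : 0 < N) (μ : Fin N → Measure (Pt d))
    (hμ : ∀ i, IsProbabilityMeasure (μ i) ∧ FinitelySupported (μ i))
    (l : Fin N → ℝ) (hl : InSimplex l)
    (pitil : Measure (Fin N → Pt d)) (hplan : IsPlan μ pitil)
    (hwass : ∀ i : Fin N, i ≠ ⟨0, hN⟩ →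
      (∫⁻ x, ENNReal.ofReal (‖x ⟨0, hN⟩ - x i‖ ^ 2) ∂pitil) = W2sq (μ ⟨0, hN⟩) (μ i)) :
    MOT l pitil
      ≤ ∑ i ∈ Finset.univ.erase (⟨0, hN⟩ : Fin N),
          ENNReal.ofReal (l i) * W2sq (μ ⟨0, hN⟩) (μ i)
    ∧ ∀ pihat, IsPlan μ pihat → (∀ π, IsPlan μ π → MOT l pihat ≤ MOT l π) →
        MOT l pitil ≤ ENNReal.ofReal (1 / l ⟨0, hN⟩) * MOT l pihat := by
  set i0 : Fin N := ⟨0, hN⟩ with hi0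
  have hi0lt : ∀ t : Fin N, t ≠ i0 → i0 < t := by
    intro t ht
    have : t.val ≠ 0 := fun h => ht (Fin.ext h)
    exact Nat.pos_of_ne_zero this
  -- measurability
  have hm : ∀ t : Fin N, Measurable fun x : Fin N → Pt d =>
      ENNReal.ofReal (‖x i0 - x t‖ ^ 2) := fun t =>
    (((measurable_pi_apply i0).sub (measurable_pi_apply t)).norm.pow_const 2).ennreal_ofReal
  -- the integrand of MOT as a single ofReal
  have integrand_eq : ∀ (x : Fin N → Pt d),
      (∑ s : Fin N, ∑ t : Fin N,
        (if s < t then ENNReal.ofReal (l s * l t * ‖x s - x t‖ ^ 2) else 0))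
      = ENNReal.ofReal (∑ s : Fin N, ∑ t : Fin N,
          (if s < t then l s * l t * ‖x s - x t‖ ^ 2 else 0)) := by
    intro x
    have hnn : ∀ s t : Fin N, (0:ℝ) ≤ (if s < t then l s * l t * ‖x s - x t‖ ^ 2 else 0) := by
      intro s t; split
      · exact mul_nonneg (mul_nonneg (hl.1 s).le (hl.1 t).le) (sq_nonneg _)
      · exact le_refl 0
    rw [ENNReal.ofReal_sum_of_nonneg (fun s _ => Finset.sum_nonneg fun t _ => hnn s t)]
    refine Finset.sum_congr rfl fun s _ => ?_
    rw [ENNReal.ofReal_sum_of_nonneg (fun t _ => hnn s t)]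
    refine Finset.sum_congr rfl fun t _ => ?_
    split <;> simp
  -- PART 1
  have part1 : MOT l pitil ≤ ∑ i ∈ Finset.univ.erase i0,
      ENNReal.ofReal (l i) * W2sq (μ i0) (μ i) := by
    have step1 : MOT l pitil
        ≤ ∫⁻ x, ∑ t : Fin N, ENNReal.ofReal (l t) * ENNReal.ofReal (‖x i0 - x t‖ ^ 2) ∂pitil := by
      refine lintegral_mono fun x => ?_
      rw [integrand_eq x]
      calc ENNReal.ofReal (∑ s : Fin N, ∑ t : Fin N,
              (if s < t then l s * l t * ‖x s - x t‖ ^ 2 else 0))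
          ≤ ENNReal.ofReal (∑ t, l t * ‖x t - x i0‖ ^ 2) :=
            ENNReal.ofReal_le_ofReal (pointwise_key l hl.2 x i0)
        _ = ∑ t : Fin N, ENNReal.ofReal (l t * ‖x t - x i0‖ ^ 2) :=
            ENNReal.ofReal_sum_of_nonneg (fun t _ => mul_nonneg (hl.1 t).le (sq_nonneg _))
        _ = ∑ t : Fin N, ENNReal.ofReal (l t) * ENNReal.ofReal (‖x i0 - x t‖ ^ 2) := by
            refine Finset.sum_congr rfl fun t _ => ?_
            rw [ENNReal.ofReal_mul (hl.1 t).le, norm_sub_rev]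
    have step2 : (∫⁻ x, ∑ t : Fin N,
          ENNReal.ofReal (l t) * ENNReal.ofReal (‖x i0 - x t‖ ^ 2) ∂pitil)
        = ∑ t : Fin N, ENNReal.ofReal (l t)
            * ∫⁻ x, ENNReal.ofReal (‖x i0 - x t‖ ^ 2) ∂pitil := by
      rw [lintegral_finset_sum _ (fun t _ => (hm t).const_mul _)]
      exact Finset.sum_congr rfl fun t _ => lintegral_const_mul _ (hm t)
    have step3 : (∑ t : Fin N, ENNReal.ofReal (l t)
          * ∫⁻ x, ENNReal.ofReal (‖x i0 - x t‖ ^ 2) ∂pitil)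
        = ∑ t ∈ Finset.univ.erase i0, ENNReal.ofReal (l t) * W2sq (μ i0) (μ t) := by
      rw [← Finset.sum_erase_add _ _ (Finset.mem_univ i0)]
      have : (∫⁻ x, ENNReal.ofReal (‖x i0 - x i0‖ ^ 2) ∂pitil) = 0 := by
        simp
      rw [this, mul_zero, add_zero]
      exact Finset.sum_congr rfl fun t ht =>
        by rw [hwass t (Finset.ne_of_mem_erase ht)]
    calc MOT l pitil ≤ _ := step1
      _ = _ := step2
      _ = _ := step3
  refine ⟨part1, ?_⟩
  -- PART 2
  intro pihat hplanhat _hopt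
  have hW : ∀ t : Fin N, t ≠ i0 →
      W2sq (μ i0) (μ t) ≤ ∫⁻ x, ENNReal.ofReal (‖x i0 - x t‖ ^ 2) ∂pihat := by
    intro t ht
    have hf : Measurable fun x : Fin N → Pt d => (x i0, x t) :=
      (measurable_pi_apply i0).prodMk (measurable_pi_apply t)
    refine sInf_le ⟨pihat.map fun x => (x i0, x t), ⟨?_, ?_, ?_⟩, ?_⟩
    · haveI := hplanhat.1
      exact Measure.isProbabilityMeasure_map hf.aemeasurable
    · rw [Measure.map_map measurable_fst hf]; exact hplanhat.2 i0
    · rw [Measure.map_map measurable_snd hf]; exact hplanhat.2 t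
    · rw [lintegral_map (f := fun p : Pt d × Pt d => ENNReal.ofReal (‖p.1 - p.2‖ ^ 2)) ((measurable_fst.sub measurable_snd).norm.pow_const 2).ennreal_ofReal hf]
  have hrow : (∑ t ∈ Finset.univ.erase i0, ENNReal.ofReal (l i0 * l t)
        * ∫⁻ x, ENNReal.ofReal (‖x i0 - x t‖ ^ 2) ∂pihat) ≤ MOT l pihat := by
    have hpt : ∀ x : Fin N → Pt d,
        (∑ t ∈ Finset.univ.erase i0, ENNReal.ofReal (l i0 * l t * ‖x i0 - x t‖ ^ 2))
          ≤ ∑ s : Fin N, ∑ t : Fin N,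
              (if s < t then ENNReal.ofReal (l s * l t * ‖x s - x t‖ ^ 2) else 0) := by
      intro x
      have h1 : (∑ t ∈ Finset.univ.erase i0, ENNReal.ofReal (l i0 * l t * ‖x i0 - x t‖ ^ 2))
          = ∑ t : Fin N,
              (if i0 < t then ENNReal.ofReal (l i0 * l t * ‖x i0 - x t‖ ^ 2) else 0) := by
        rw [← Finset.sum_erase_add _ _ (Finset.mem_univ i0), if_neg (lt_irrefl i0), add_zero]
        exact Finset.sum_congr rfl fun t ht =>
          (if_pos (hi0lt t (Finset.ne_of_mem_erase ht))).symm
      rw [h1]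
      exact Finset.single_le_sum
        (f := fun s => ∑ t : Fin N,
          (if s < t then ENNReal.ofReal (l s * l t * ‖x s - x t‖ ^ 2) else 0))
        (fun s _ => zero_le) (Finset.mem_univ i0)
    calc (∑ t ∈ Finset.univ.erase i0, ENNReal.ofReal (l i0 * l t)
          * ∫⁻ x, ENNReal.ofReal (‖x i0 - x t‖ ^ 2) ∂pihat)
        = ∫⁻ x, ∑ t ∈ Finset.univ.erase i0,
            ENNReal.ofReal (l i0 * l t * ‖x i0 - x t‖ ^ 2) ∂pihat := by
          rw [lintegral_finset_sum]
          · refine Finset.sum_congr rfl fun t ht => ?_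
            rw [← lintegral_const_mul _ (hm t)]
            refine lintegral_congr fun x => ?_
            rw [← ENNReal.ofReal_mul (mul_nonneg (hl.1 i0).le (hl.1 t).le), mul_assoc]
          · intro t ht
            exact (((measurable_pi_apply i0).sub (measurable_pi_apply t)).norm.pow_const 2
              |>.const_mul _).ennreal_ofReal
      _ ≤ MOT l pihat := lintegral_mono hpt
  have A : ENNReal.ofReal (l i0) * MOT l pitil ≤ MOT l pihat := by
    calc ENNReal.ofReal (l i0) * MOT l pitil
        ≤ ENNReal.ofReal (l i0) * ∑ t ∈ Finset.univ.erase i0,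
            ENNReal.ofReal (l t) * W2sq (μ i0) (μ t) := mul_le_mul_right part1 _
      _ = ∑ t ∈ Finset.univ.erase i0, ENNReal.ofReal (l i0 * l t) * W2sq (μ i0) (μ t) := by
          rw [Finset.mul_sum]
          exact Finset.sum_congr rfl fun t _ => by
            rw [ENNReal.ofReal_mul (hl.1 i0).le, mul_assoc]
      _ ≤ ∑ t ∈ Finset.univ.erase i0, ENNReal.ofReal (l i0 * l t)
            * ∫⁻ x, ENNReal.ofReal (‖x i0 - x t‖ ^ 2) ∂pihat :=
          Finset.sum_le_sum fun t ht =>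
            mul_le_mul_right (hW t (Finset.ne_of_mem_erase ht)) _
      _ ≤ MOT l pihat := hrow
  calc MOT l pitil
      = (ENNReal.ofReal (1 / l i0) * ENNReal.ofReal (l i0)) * MOT l pitil := by
        rw [← ENNReal.ofReal_mul (one_div_nonneg.mpr (hl.1 i0).le),
          one_div_mul_cancel (hl.1 i0).ne', ENNReal.ofReal_one, one_mul]
    _ = ENNReal.ofReal (1 / l i0) * (ENNReal.ofReal (l i0) * MOT l pitil) := mul_assoc _ _ _
    _ ≤ ENNReal.ofReal (1 / l i0) * MOT l pihat := mul_le_mul_right A _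
end
end

section
/- Let d = 1, so μ¹,…,μ^N are finitely supported probability measures on ℝ. A plan π ∈ Π(μ¹,…,μ^N) is said to have the sorting property if the coordinatewise partial order (x₁,…,x_N) ⪯ (y₁,…,y_N) iff x_i ≤ y_i for all i, is a total order on the support of π. Then π ∈ Π(μ¹,…,μ^N) has the sorting property if and only if π is an optimal plan, i.e. minimizes Φ over Π(μ¹,…,μ^N). -/
open MeasureTheory
open scoped ENNReal

noncomputable section

/-- A measure on `ℝ` is finitely supported if it vanishes outside a finite set. -/
def FinitelySupportedR (μ : Measure ℝ) : Prop :=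
  ∃ s : Finset ℝ, μ ((s : Set ℝ)ᶜ) = 0

/-- `π` is a multi-marginal transport plan on `ℝ^N` with marginals `μ i`. -/
def IsPlanR {N : ℕ} (μ : Fin N → Measure ℝ) (π : Measure (Fin N → ℝ)) : Prop :=
  IsProbabilityMeasure π ∧ ∀ i, π.map (fun x => x i) = μ i

/-- The multi-marginal optimal transport cost `Φ(π)` for measures on `ℝ`. -/
def MOTR {N : ℕ} (l : Fin N → ℝ) (π : Measure (Fin N → ℝ)) : ℝ≥0∞ :=
  ∫⁻ x, ∑ s : Fin N, ∑ t : Fin N,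
    (if s < t then ENNReal.ofReal (l s * l t * |x s - x t| ^ 2) else 0) ∂π

/-- A plan has the sorting property if the coordinatewise partial order is total on
its support. -/
def SortingProperty {N : ℕ} (π : Measure (Fin N → ℝ)) : Prop :=
  ∀ x ∈ msupport π, ∀ y ∈ msupport π, (∀ i, x i ≤ y i) ∨ (∀ i, y i ≤ x i)

namespace Stmt18Aux


def cfun {N : ℕ} (l : Fin N → ℝ) (x : Fin N → ℝ) : ℝ :=
  ∑ s : Fin N, ∑ t : Fin N, if s < t then l s * l t * |x s - x t| ^ 2 else 0

lemma pair_ineq (a b c d : ℝ) :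
    (min a c - min b d) ^ 2 + (max a c - max b d) ^ 2 ≤ (a - b) ^ 2 + (c - d) ^ 2 := by
  rcases le_total a c with h1 | h1 <;> rcases le_total b d with h2 | h2 <;>
    simp only [min_eq_left, min_eq_right, max_eq_left, max_eq_right, h1, h2,
      min_eq_left h1, min_eq_right h1, min_eq_left h2, min_eq_right h2,
      max_eq_right h1, max_eq_left h1, max_eq_right h2, max_eq_left h2] <;>
    nlinarith [mul_nonneg (sub_nonneg.2 h1) (sub_nonneg.2 h2)]

lemma pair_strict {a b c d : ℝ} (h : (a - c) * (b - d) < 0) :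
    (min a c - min b d) ^ 2 + (max a c - max b d) ^ 2 < (a - b) ^ 2 + (c - d) ^ 2 := by
  rcases le_total a c with h1 | h1 <;> rcases le_total b d with h2 | h2 <;>
    simp only [min_eq_left h1, min_eq_right h1, min_eq_left h2, min_eq_right h2,
      max_eq_right h1, max_eq_left h1, max_eq_right h2, max_eq_left h2] <;>
    nlinarith

lemma cfun_nonneg {N : ℕ} {l : Fin N → ℝ} (hl : ∀ i, 0 < l i) (x : Fin N → ℝ) :
    0 ≤ cfun l x := by
  refine Finset.sum_nonneg fun s _ => Finset.sum_nonneg fun t _ => ?_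
  split_ifs
  · have := hl s; have := hl t; positivity
  · exact le_rfl

lemma cfun_lattice {N : ℕ} {l : Fin N → ℝ} (hl : ∀ i, 0 < l i) (x y : Fin N → ℝ)
    {s t : Fin N} (h1 : y s < x s) (h2 : x t < y t) :
    cfun l (x ⊓ y) + cfun l (x ⊔ y) < cfun l x + cfun l y := by
  have hst : s ≠ t := fun h => by subst h; linarith
  have hpt : ∀ u v : Fin N, (x ⊓ y) u = min (x u) (y u) ∧ (x ⊔ y) u = max (x u) (y u) := by
    intro u v; constructor <;> rfl
  -- rewrite as sums over pairs
  have key : ∀ z : Fin N → ℝ, cfun l z = ∑ p ∈ (Finset.univ ×ˢ Finset.univ : Finset (Fin N × Fin N)),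
      (if p.1 < p.2 then l p.1 * l p.2 * |z p.1 - z p.2| ^ 2 else 0) := by
    intro z; rw [Finset.sum_product]; rfl
  rw [key, key, key, key, ← Finset.sum_add_distrib, ← Finset.sum_add_distrib]
  set p0 : Fin N × Fin N := if s < t then (s, t) else (t, s) with hp0
  refine Finset.sum_lt_sum (fun p _ => ?_) ⟨p0, Finset.mem_product.2 ⟨Finset.mem_univ _, Finset.mem_univ _⟩, ?_⟩
  · by_cases hp : p.1 < p.2
    · simp only [hp, if_true]
      have hll : 0 ≤ l p.1 * l p.2 := le_of_lt (mul_pos (hl p.1) (hl p.2))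
      have := pair_ineq (x p.1) (x p.2) (y p.1) (y p.2)
      simp only [Pi.inf_apply, Pi.sup_apply, sq_abs]
      nlinarith
    · simp [hp]
  · have hlt : p0.1 < p0.2 := by
      rw [hp0]; split_ifs with h
      · exact h
      · exact lt_of_le_of_ne (le_of_not_gt h) (Ne.symm hst)
    have hcross : (x p0.1 - y p0.1) * (x p0.2 - y p0.2) < 0 := by
      rw [hp0]; split_ifs <;> simp <;> nlinarith
    simp only [hlt, if_true]
    have hll : 0 < l p0.1 * l p0.2 := mul_pos (hl p0.1) (hl p0.2)
    have := pair_strict hcross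
    simp only [Pi.inf_apply, Pi.sup_apply, sq_abs]
    nlinarith



variable {N : ℕ}

def marg (T : Finset (Fin N → ℝ)) (w : (Fin N → ℝ) → ℝ) (i : Fin N) (a : ℝ) : ℝ :=
  ∑ x ∈ T, if x i = a then w x else 0

def cost (T : Finset (Fin N → ℝ)) (l : Fin N → ℝ) (w : (Fin N → ℝ) → ℝ) : ℝ :=
  ∑ x ∈ T, w x * cfun l x

def SortedOn (T : Finset (Fin N → ℝ)) (w : (Fin N → ℝ) → ℝ) : Prop :=
  ∀ x ∈ T, ∀ y ∈ T, w x ≠ 0 → w y ≠ 0 → (∀ i, x i ≤ y i) ∨ (∀ i, y i ≤ x i)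

/-- sum of a single indicator over T -/
lemma sum_ind (T : Finset (Fin N → ℝ)) (c : Fin N → ℝ) (hc : c ∈ T) (i : Fin N) (a : ℝ) (ε : ℝ) :
    (∑ z ∈ T, if z i = a then (if z = c then ε else 0) else 0) = if c i = a then ε else 0 := by
  rw [Finset.sum_congr rfl (g := fun z => if z = c then (if c i = a then ε else 0) else 0)
    (fun z _ => by by_cases h : z = c <;> simp [h])]
  rw [Finset.sum_ite_eq' T c (fun _ => if c i = a then ε else 0), if_pos hc]

lemma sum_pt (T : Finset (Fin N → ℝ)) (c : Fin N → ℝ) (hc : c ∈ T) (f : (Fin N → ℝ) → ℝ) (ε : ℝ) :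
    (∑ z ∈ T, (if z = c then ε else 0) * f z) = ε * f c := by
  rw [Finset.sum_congr rfl (g := fun z => if z = c then ε * f c else 0)
    (fun z _ => by by_cases h : z = c <;> simp [h])]
  rw [Finset.sum_ite_eq' T c (fun _ => ε * f c), if_pos hc]

lemma sum_pt' (T : Finset (Fin N → ℝ)) (c : Fin N → ℝ) (hc : c ∈ T) (ε : ℝ) :
    (∑ z ∈ T, if z = c then ε else 0) = ε := by
  rw [Finset.sum_ite_eq' T c (fun _ => ε), if_pos hc]

/-- An unsorted weight function can be strictly improved keeping marginals. -/
lemma swap_improve {l : Fin N → ℝ} (hl : ∀ i, 0 < l i) (T : Finset (Fin N → ℝ))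
    (hT : ∀ x ∈ T, ∀ y ∈ T, x ⊓ y ∈ T ∧ x ⊔ y ∈ T)
    (w : (Fin N → ℝ) → ℝ) (h0 : ∀ x ∈ T, 0 ≤ w x)
    {x : Fin N → ℝ} (hx : x ∈ T) {y : Fin N → ℝ} (hy : y ∈ T)
    (hwx : w x ≠ 0) (hwy : w y ≠ 0)
    (hcon : ¬((∀ i, x i ≤ y i) ∨ (∀ i, y i ≤ x i))) :
    ∃ v : (Fin N → ℝ) → ℝ, (∀ z ∈ T, 0 ≤ v z) ∧ (∀ i a, marg T v i a = marg T w i a) ∧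
      (∑ z ∈ T, v z = ∑ z ∈ T, w z) ∧ cost T l v < cost T l w := by
  push_neg at hcon
  obtain ⟨⟨t, ht⟩, ⟨s, hs⟩⟩ := hcon
  -- here ht : y t < x t, hs : x s < y s
  have hwx' : 0 < w x := lt_of_le_of_ne (h0 x hx) (Ne.symm hwx)
  have hwy' : 0 < w y := lt_of_le_of_ne (h0 y hy) (Ne.symm hwy)
  set ε := min (w x) (w y) with hε
  have hε0 : 0 < ε := lt_min hwx' hwy'
  -- distinctness
  have hne1 : x ⊓ y ≠ x := fun h => by
    have := congrFun h t; simp only [Pi.inf_apply] at this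
    rw [min_eq_right (le_of_lt ht)] at this; exact absurd this (ne_of_lt ht)
  have hne2 : x ⊓ y ≠ y := fun h => by
    have := congrFun h s; simp only [Pi.inf_apply] at this
    rw [min_eq_left (le_of_lt hs)] at this; exact absurd this (ne_of_lt hs)
  have hne3 : x ⊔ y ≠ x := fun h => by
    have := congrFun h s; simp only [Pi.sup_apply] at this
    rw [max_eq_right (le_of_lt hs)] at this; exact absurd this (ne_of_gt hs)
  have hne4 : x ⊔ y ≠ y := fun h => by
    have := congrFun h t; simp only [Pi.sup_apply] at this
    rw [max_eq_left (le_of_lt ht)] at this; exact absurd this (ne_of_gt ht)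
  have hne5 : x ⊓ y ≠ x ⊔ y := fun h => by
    have := congrFun h s; simp only [Pi.inf_apply, Pi.sup_apply] at this
    rw [min_eq_left (le_of_lt hs), max_eq_right (le_of_lt hs)] at this
    exact absurd this (ne_of_lt hs)
  have hxy : x ≠ y := fun h => by rw [h] at hs; exact lt_irrefl _ hs
  set v : (Fin N → ℝ) → ℝ := fun z =>
    w z + (if z = x ⊓ y then ε else 0) + (if z = x ⊔ y then ε else 0)
      - (if z = x then ε else 0) - (if z = y then ε else 0) with hv
  have hv0 : ∀ z ∈ T, 0 ≤ v z := by
    intro z hz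
    rw [hv]
    dsimp only
    split_ifs with a1 a2 a3 a4 <;>
      first
        | (exfalso; subst_vars;
           first | exact hne1 rfl | exact hne2 rfl | exact hne3 rfl | exact hne4 rfl
                 | exact hne5 rfl | exact hxy rfl | exact hne1 a1 | exact hne5 a1)
        | (have := h0 z hz
           have h1' := min_le_left (w x) (w y)
           have h2' := min_le_right (w x) (w y)
           subst_vars <;> linarith)
  have hvm : ∀ i a, marg T v i a = marg T w i a := by
    intro i a
    rw [hv]
    unfold marg
    have expand : ∀ z : Fin N → ℝ, (if z i = a then
        (w z + (if z = x ⊓ y then ε else 0) + (if z = x ⊔ y then ε else 0)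
          - (if z = x then ε else 0) - (if z = y then ε else 0)) else 0)
        = (if z i = a then w z else 0) + (if z i = a then (if z = x ⊓ y then ε else 0) else 0)
          + (if z i = a then (if z = x ⊔ y then ε else 0) else 0)
          - (if z i = a then (if z = x then ε else 0) else 0)
          - (if z i = a then (if z = y then ε else 0) else 0) := by
      intro z; by_cases h : z i = a <;> simp [h]
    rw [Finset.sum_congr rfl fun z _ => expand z]
    rw [Finset.sum_sub_distrib, Finset.sum_sub_distrib, Finset.sum_add_distrib,
      Finset.sum_add_distrib]
    rw [sum_ind T _ (hT x hx y hy).1 i a ε, sum_ind T _ (hT x hx y hy).2 i a ε,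
      sum_ind T x hx i a ε, sum_ind T y hy i a ε]
    have : ((if (x ⊓ y) i = a then ε else 0) + (if (x ⊔ y) i = a then ε else 0))
        = ((if x i = a then ε else 0) + (if y i = a then ε else 0)) := by
      have hmin : (x ⊓ y) i = min (x i) (y i) := rfl
      have hmax : (x ⊔ y) i = max (x i) (y i) := rfl
      rw [hmin, hmax]
      rcases le_total (x i) (y i) with h | h
      · rw [min_eq_left h, max_eq_right h]
      · rw [min_eq_right h, max_eq_left h]; exact add_comm _ _
    linarith
  have hcost : cost T l v < cost T l w := by
    unfold cost
    have expand : ∀ z : Fin N → ℝ, v z * cfun l z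
        = w z * cfun l z + (if z = x ⊓ y then ε else 0) * cfun l z
          + (if z = x ⊔ y then ε else 0) * cfun l z
          - (if z = x then ε else 0) * cfun l z - (if z = y then ε else 0) * cfun l z := by
      intro z; rw [hv]; ring
    rw [Finset.sum_congr rfl fun z _ => expand z]
    rw [Finset.sum_sub_distrib, Finset.sum_sub_distrib, Finset.sum_add_distrib,
      Finset.sum_add_distrib]
    rw [sum_pt T _ (hT x hx y hy).1, sum_pt T _ (hT x hx y hy).2, sum_pt T x hx, sum_pt T y hy]
    have hlat := cfun_lattice hl x y ht hs
    nlinarith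
  have hvsum : ∑ z ∈ T, v z = ∑ z ∈ T, w z := by
    rw [hv]
    dsimp only
    rw [Finset.sum_sub_distrib, Finset.sum_sub_distrib, Finset.sum_add_distrib,
      Finset.sum_add_distrib]
    rw [sum_pt' T _ (hT x hx y hy).1, sum_pt' T _ (hT x hx y hy).2, sum_pt' T x hx,
      sum_pt' T y hy]
    ring
  exact ⟨v, hv0, hvm, hvsum, hcost⟩

/-- A cost minimizer among weights with given marginals is sorted. -/
lemma min_sorted {l : Fin N → ℝ} (hl : ∀ i, 0 < l i) (T : Finset (Fin N → ℝ))
    (hT : ∀ x ∈ T, ∀ y ∈ T, x ⊓ y ∈ T ∧ x ⊔ y ∈ T)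
    (w : (Fin N → ℝ) → ℝ) (h0 : ∀ x ∈ T, 0 ≤ w x)
    (hmin : ∀ v, (∀ x ∈ T, 0 ≤ v x) → (∀ i a, marg T v i a = marg T w i a) →
      cost T l w ≤ cost T l v) :
    SortedOn T w := by
  intro x hx y hy hwx hwy
  by_contra hcon
  obtain ⟨v, hv0, hvm, _, hcost⟩ := swap_improve hl T hT w h0 hx hy hwx hwy hcon
  exact absurd (hmin v hv0 hvm) (not_le.2 hcost)


variable {N : ℕ}

/-- term ≤ marginal sum -/
lemma le_marg (T : Finset (Fin N → ℝ)) (w : (Fin N → ℝ) → ℝ) (h0 : ∀ x ∈ T, 0 ≤ w x)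
    {x : Fin N → ℝ} (hx : x ∈ T) (i : Fin N) : w x ≤ marg T w i (x i) := by
  unfold marg
  have : w x = if x i = x i then w x else 0 := by simp
  rw [this]
  refine Finset.single_le_sum (f := fun z => if z i = x i then w z else 0) (fun z hz => ?_) hx
  split_ifs with h
  · exact h0 z hz
  · exact le_rfl

/-- if the marginal is nonzero there is a support point in the fiber -/
lemma marg_ne_zero (T : Finset (Fin N → ℝ)) (w : (Fin N → ℝ) → ℝ) {i : Fin N} {a : ℝ}
    (h : marg T w i a ≠ 0) : ∃ z ∈ T, w z ≠ 0 ∧ z i = a := by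
  by_contra hcon
  push_neg at hcon
  refine h (Finset.sum_eq_zero fun z hz => ?_)
  split_ifs with h'
  · by_contra hw; exact absurd h' (hcon z hz hw)
  · rfl

/-- the top element of the support of a sorted weight -/
lemma exists_top (T : Finset (Fin N → ℝ)) (w : (Fin N → ℝ) → ℝ) (hs : SortedOn T w)
    {S : Finset (Fin N → ℝ)} (hS : S ⊆ T.filter fun z => w z ≠ 0) (hne : S.Nonempty) :
    ∃ m ∈ S, ∀ z ∈ S, ∀ i, z i ≤ m i := by
  obtain ⟨m, hm, hmax⟩ := S.exists_maximal hne
  refine ⟨m, hm, fun z hz i => ?_⟩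
  have hzT := Finset.mem_filter.1 (hS hz)
  have hmT := Finset.mem_filter.1 (hS hm)
  rcases hs z hzT.1 m hmT.1 hzT.2 hmT.2 with h | h
  · exact h i
  · -- m ≤ z pointwise; then z = m or contradiction with maximality
    by_cases hzm : z = m
    · subst hzm; exact le_rfl
    · exfalso
      exact hzm (le_antisymm (hmax hz (fun j => h j)) (fun j => h j))

lemma top_unique_val (hN : 0 < N) (T : Finset (Fin N → ℝ)) (w : (Fin N → ℝ) → ℝ)
    (h0 : ∀ x ∈ T, 0 ≤ w x) (hs : SortedOn T w)
    {m : Fin N → ℝ} (hmS : m ∈ T.filter fun z => w z ≠ 0)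
    (htop : ∀ z ∈ T.filter (fun z => w z ≠ 0), ∀ i, z i ≤ m i) :
    ∃ i, marg T w i (m i) = w m := by
  by_contra hcon
  push_neg at hcon
  obtain ⟨hmT, hwm⟩ := Finset.mem_filter.1 hmS
  -- for each i there is another support point in the fiber of m i
  have hfib : ∀ i : Fin N, ∃ z ∈ T, w z ≠ 0 ∧ z ≠ m ∧ z i = m i := by
    intro i
    by_contra hfi
    push_neg at hfi
    have : marg T w i (m i) = w m := by
      unfold marg
      rw [Finset.sum_eq_single m]
      · simp
      · intro z hz hzm
        split_ifs with h'
        · by_contra hw; exact absurd h' (hfi z hz hw hzm)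
        · rfl
      · intro h; exact absurd hmT h
    exact hcon i this
  -- the set of support points other than m
  set S' := (T.filter fun z => w z ≠ 0).erase m with hS'
  have hS'ne : S'.Nonempty := by
    obtain ⟨z, hz, hwz, hzm, _⟩ := hfib ⟨0, hN⟩
    exact ⟨z, Finset.mem_erase.2 ⟨hzm, Finset.mem_filter.2 ⟨hz, hwz⟩⟩⟩
  obtain ⟨y, hyS', hytop⟩ := exists_top T w hs (Finset.erase_subset _ _) hS'ne
  have hym : y ≠ m := (Finset.mem_erase.1 hyS').1
  apply hym
  funext i
  obtain ⟨z, hz, hwz, hzm, hzi⟩ := hfib i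
  have hzS' : z ∈ S' := Finset.mem_erase.2 ⟨hzm, Finset.mem_filter.2 ⟨hz, hwz⟩⟩
  have h1 : z i ≤ y i := hytop z hzS' i
  have h2 : y i ≤ m i := htop y (Finset.mem_of_mem_erase hyS') i
  rw [hzi] at h1
  exact le_antisymm h2 h1

/-- If `w` vanishes on `T` then so does anything with the same marginals. -/
lemma all_zero (hN : 0 < N) (T : Finset (Fin N → ℝ)) (w w' : (Fin N → ℝ) → ℝ)
    (h0' : ∀ x ∈ T, 0 ≤ w' x) (hm : ∀ i a, marg T w i a = marg T w' i a)
    (hwz : ∀ z ∈ T, w z = 0) : ∀ x ∈ T, w' x = 0 := by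
  intro x hx
  have hmz : marg T w' ⟨0, hN⟩ (x ⟨0, hN⟩) = 0 := by
    rw [← hm]
    exact Finset.sum_eq_zero fun z hz => by split_ifs with h; exacts [hwz z hz, rfl]
  have := Finset.sum_eq_zero_iff_of_nonneg
    (f := fun z => if z ⟨0, hN⟩ = x ⟨0, hN⟩ then w' z else 0)
    (s := T) (fun z hz => by split_ifs with h; exacts [h0' z hz, le_rfl])
  have hx0 := (this.1 hmz) x hx
  simp only [if_pos rfl] at hx0
  exact hx0

/-- Uniqueness of sorted couplings with given marginals. -/
lemma sorted_unique (hN : 0 < N) (T : Finset (Fin N → ℝ)) :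
    ∀ n : ℕ, ∀ w w' : (Fin N → ℝ) → ℝ,
    (∀ x ∈ T, 0 ≤ w x) → (∀ x ∈ T, 0 ≤ w' x) → SortedOn T w → SortedOn T w' →
    (∀ i a, marg T w i a = marg T w' i a) →
    (T.filter fun z => w z ≠ 0).card ≤ n → ∀ x ∈ T, w x = w' x := by
  intro n
  induction n with
  | zero =>
    intro w w' h0 h0' _ _ hm hcard x hx
    have hempty : (T.filter fun z => w z ≠ 0) = ∅ := Finset.card_eq_zero.1 (Nat.le_zero.1 hcard)
    have hwz : ∀ z ∈ T, w z = 0 := by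
      intro z hz
      by_contra h
      have : z ∈ T.filter fun z => w z ≠ 0 := Finset.mem_filter.2 ⟨hz, h⟩
      rw [hempty] at this; exact absurd this (Finset.notMem_empty z)
    rw [hwz x hx, all_zero hN T w w' h0' hm hwz x hx]
  | succ n ih =>
    intro w w' h0 h0' hs hs' hm hcard x hx
    by_cases hSne : (T.filter fun z => w z ≠ 0).Nonempty
    case neg =>
      have hwz : ∀ z ∈ T, w z = 0 := by
        intro z hz
        by_contra h
        exact hSne ⟨z, Finset.mem_filter.2 ⟨hz, h⟩⟩
      rw [hwz x hx, all_zero hN T w w' h0' hm hwz x hx]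
    obtain ⟨m, hmS, htop⟩ := exists_top T w hs (le_refl _) hSne
    obtain ⟨hmT, hwm⟩ := Finset.mem_filter.1 hmS
    -- support of w' nonempty with same top
    have hS'ne : (T.filter fun z => w' z ≠ 0).Nonempty := by
      have h1 : marg T w ⟨0, hN⟩ (m ⟨0, hN⟩) ≠ 0 := by
        intro h
        have := le_marg T w h0 hmT ⟨0, hN⟩
        rw [h] at this
        exact hwm (le_antisymm this (h0 m hmT))
      rw [hm] at h1
      obtain ⟨z, hz, hwz, _⟩ := marg_ne_zero T w' h1
      exact ⟨z, Finset.mem_filter.2 ⟨hz, hwz⟩⟩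
    obtain ⟨m', hm'S, htop'⟩ := exists_top T w' hs' (le_refl _) hS'ne
    obtain ⟨hm'T, hwm'⟩ := Finset.mem_filter.1 hm'S
    -- m = m'
    have hmm' : m = m' := by
      funext i
      have h1 : marg T w i (m i) ≠ 0 := fun h => by
        have := le_marg T w h0 hmT i
        rw [h] at this; exact hwm (le_antisymm this (h0 m hmT))
      rw [hm] at h1
      obtain ⟨z, hz, hwz, hzi⟩ := marg_ne_zero T w' h1
      have hle1 : m i ≤ m' i := hzi ▸ htop' z (Finset.mem_filter.2 ⟨hz, hwz⟩) i
      have h2 : marg T w' i (m' i) ≠ 0 := fun h => by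
        have := le_marg T w' h0' hm'T i
        rw [h] at this; exact hwm' (le_antisymm this (h0' m' hm'T))
      rw [← hm] at h2
      obtain ⟨z', hz', hwz', hzi'⟩ := marg_ne_zero T w h2
      have hle2 : m' i ≤ m i := hzi' ▸ htop z' (Finset.mem_filter.2 ⟨hz', hwz'⟩) i
      exact le_antisymm hle1 hle2
    -- equal top masses
    have hval : w m = w' m := by
      obtain ⟨i, hi⟩ := top_unique_val hN T w h0 hs hmS htop
      obtain ⟨j, hj⟩ := top_unique_val hN T w' h0' hs' (hmm' ▸ hm'S) (hmm' ▸ htop')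
      have h1 : w' m ≤ w m := by
        have := le_marg T w' h0' hmT i
        rw [← hm, hi] at this; exact this
      have h2 : w m ≤ w' m := by
        have := le_marg T w h0 hmT j
        rw [hm, hj] at this; exact this
      exact le_antisymm h2 h1
    -- reduced weights
    set w₂ : (Fin N → ℝ) → ℝ := fun z => if z = m then 0 else w z with hw₂
    set w'₂ : (Fin N → ℝ) → ℝ := fun z => if z = m then 0 else w' z with hw'₂
    have hred : ∀ z ∈ T, w₂ z = w'₂ z := by
      apply ih w₂ w'₂
      · intro z hz; rw [hw₂]; dsimp only; split_ifs; exacts [le_rfl, h0 z hz]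
      · intro z hz; rw [hw'₂]; dsimp only; split_ifs; exacts [le_rfl, h0' z hz]
      · intro a ha b hb ha' hb'
        have ha'' : w a ≠ 0 := by rw [hw₂] at ha'; dsimp only at ha'; split_ifs at ha'; exacts [absurd rfl ha', ha']
        have hb'' : w b ≠ 0 := by rw [hw₂] at hb'; dsimp only at hb'; split_ifs at hb'; exacts [absurd rfl hb', hb']
        exact hs a ha b hb ha'' hb''
      · intro a ha b hb ha' hb'
        have ha'' : w' a ≠ 0 := by rw [hw'₂] at ha'; dsimp only at ha'; split_ifs at ha'; exacts [absurd rfl ha', ha']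
        have hb'' : w' b ≠ 0 := by rw [hw'₂] at hb'; dsimp only at hb'; split_ifs at hb'; exacts [absurd rfl hb', hb']
        exact hs' a ha b hb ha'' hb''
      · -- marginals
        intro i a
        have e1 : ∀ (u : (Fin N → ℝ) → ℝ), marg T (fun z => if z = m then 0 else u z) i a
            = marg T u i a - (if m i = a then u m else 0) := by
          intro u
          unfold marg
          rw [← sum_ind T m hmT i a (u m), ← Finset.sum_sub_distrib]
          refine Finset.sum_congr rfl fun z hz => ?_
          by_cases h1 : z i = a <;> by_cases h2 : z = m <;> simp [h1, h2]
        rw [e1 w, e1 w', hm, hval]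
      · -- cardinality decreases
        have hsub : (T.filter fun z => w₂ z ≠ 0) ⊆ (T.filter fun z => w z ≠ 0).erase m := by
          intro z hz
          obtain ⟨hzT, hz0⟩ := Finset.mem_filter.1 hz
          rw [hw₂] at hz0; dsimp only at hz0
          split_ifs at hz0 with h
          · exact absurd rfl hz0
          · exact Finset.mem_erase.2 ⟨h, Finset.mem_filter.2 ⟨hzT, hz0⟩⟩
        have hlt : (T.filter fun z => w₂ z ≠ 0).card < n + 1 :=
          calc (T.filter fun z => w₂ z ≠ 0).card ≤ ((T.filter fun z => w z ≠ 0).erase m).card :=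
                Finset.card_le_card hsub
            _ < (T.filter fun z => w z ≠ 0).card := Finset.card_erase_lt_of_mem hmS
            _ ≤ n + 1 := hcard
        exact Nat.lt_succ_iff.1 hlt
    by_cases hxm : x = m
    · rw [hxm]; exact hval
    · have := hred x hx
      rw [hw₂, hw'₂] at this; dsimp only at this
      rw [if_neg hxm, if_neg hxm] at this
      exact this


variable {N : ℕ}

lemma exists_min (hN : 0 < N) (T : Finset (Fin N → ℝ)) (l : Fin N → ℝ)
    (m : Fin N → ℝ → ℝ) (hm1 : ∀ i a, m i a ≤ 1)
    (w : (Fin N → ℝ) → ℝ) (hw0 : ∀ x ∈ T, 0 ≤ w x) (hwm : ∀ i a, marg T w i a = m i a) :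
    ∃ w₀ : (Fin N → ℝ) → ℝ, (∀ x ∈ T, 0 ≤ w₀ x) ∧ (∀ i a, marg T w₀ i a = m i a) ∧
      ∀ v, (∀ x ∈ T, 0 ≤ v x) → (∀ i a, marg T v i a = m i a) → cost T l w₀ ≤ cost T l v := by
  classical
  set V := {x // x ∈ T}
  -- extension and restriction
  set ext : (V → ℝ) → ((Fin N → ℝ) → ℝ) := fun u x => if h : x ∈ T then u ⟨x, h⟩ else 0 with hext
  set margV : (V → ℝ) → Fin N → ℝ → ℝ := fun u i a => ∑ z : V, if (z : Fin N → ℝ) i = a then u z else 0 with hmargV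
  set costV : (V → ℝ) → ℝ := fun u => ∑ z : V, u z * cfun l (z : Fin N → ℝ) with hcostV
  have hmarg_ext : ∀ u i a, marg T (ext u) i a = margV u i a := by
    intro u i a
    unfold marg
    rw [hmargV]
    dsimp only
    rw [← Finset.sum_attach T (fun x => if x i = a then ext u x else 0), Finset.univ_eq_attach]
    refine Finset.sum_congr rfl fun z _ => ?_
    rw [hext]; dsimp only
    rw [dif_pos z.2]
  have hcost_eq : ∀ v : (Fin N → ℝ) → ℝ, cost T l v = costV (fun z => v ↑z) := by
    intro v
    unfold cost
    rw [hcostV]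
    dsimp only
    rw [← Finset.sum_attach T (fun x => v x * cfun l x), Finset.univ_eq_attach]
  have hmarg_res : ∀ (v : (Fin N → ℝ) → ℝ) i a, marg T v i a = margV (fun z => v ↑z) i a := by
    intro v i a
    unfold marg
    rw [hmargV]
    dsimp only
    rw [← Finset.sum_attach T (fun x => if x i = a then v x else 0), Finset.univ_eq_attach]
  set K : Set (V → ℝ) := {u | (∀ z, 0 ≤ u z) ∧ ∀ i a, margV u i a = m i a} with hK
  have hKsub : K ⊆ Set.Icc (0 : V → ℝ) 1 := by
    intro u hu
    constructor
    · intro z; exact hu.1 z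
    · intro z
      have hle : u z ≤ margV u ⟨0, hN⟩ ((z : Fin N → ℝ) ⟨0, hN⟩) := by
        rw [hmargV]; dsimp only
        have : u z = if (z : Fin N → ℝ) ⟨0, hN⟩ = (z : Fin N → ℝ) ⟨0, hN⟩ then u z else 0 := by simp
        rw [this]
        refine Finset.single_le_sum (f := fun z' : V => if (z' : Fin N → ℝ) ⟨0, hN⟩ = (z : Fin N → ℝ) ⟨0, hN⟩ then u z' else 0) (fun z' _ => ?_) (Finset.mem_univ z)
        split_ifs; exacts [hu.1 z', le_rfl]
      calc u z ≤ _ := hle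
        _ = m ⟨0, hN⟩ ((z : Fin N → ℝ) ⟨0, hN⟩) := hu.2 _ _
        _ ≤ 1 := hm1 _ _
  have hKclosed : IsClosed K := by
    rw [hK]
    have h1 : IsClosed {u : V → ℝ | ∀ z, 0 ≤ u z} := by
      have : {u : V → ℝ | ∀ z, 0 ≤ u z} = ⋂ z, {u | 0 ≤ u z} := by ext u; simp
      rw [this]
      exact isClosed_iInter fun z => isClosed_le continuous_const (continuous_apply z)
    have h2 : IsClosed {u : V → ℝ | ∀ i a, margV u i a = m i a} := by
      have : {u : V → ℝ | ∀ i a, margV u i a = m i a} = ⋂ i, ⋂ a, {u | margV u i a = m i a} := by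
        ext u; simp
      rw [this]
      refine isClosed_iInter fun i => isClosed_iInter fun a => isClosed_eq ?_ continuous_const
      rw [hmargV]; dsimp only
      refine continuous_finset_sum _ fun z _ => ?_
      by_cases h : (z : Fin N → ℝ) i = a
      · simp only [h, if_true]; exact continuous_apply z
      · simp only [h, if_false]; exact continuous_const
    exact h1.inter h2
  have hKcompact : IsCompact K := (isCompact_Icc).of_isClosed_subset hKclosed hKsub
  have hKne : K.Nonempty := by
    refine ⟨fun z => w ↑z, fun z => hw0 _ z.2, fun i a => ?_⟩
    rw [← hmarg_res w i a]; exact hwm i a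
  have hcont : ContinuousOn costV K := by
    apply Continuous.continuousOn
    rw [hcostV]
    exact continuous_finset_sum _ fun z _ => (continuous_apply z).mul continuous_const
  obtain ⟨u₀, hu₀K, hu₀min⟩ := hKcompact.exists_isMinOn hKne hcont
  refine ⟨ext u₀, ?_, ?_, ?_⟩
  · intro x hx; rw [hext]; dsimp only; rw [dif_pos hx]; exact hu₀K.1 _
  · intro i a; rw [hmarg_ext]; exact hu₀K.2 i a
  · intro v hv0 hvm
    have hvK : (fun z : V => v ↑z) ∈ K := by
      refine ⟨fun z => hv0 _ z.2, fun i a => ?_⟩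
      rw [← hmarg_res v i a]; exact hvm i a
    have h1 : cost T l (ext u₀) = costV u₀ := by
      rw [hcost_eq]
      congr 1
      funext z
      rw [hext]; dsimp only; rw [dif_pos z.2]
    rw [h1, hcost_eq v]
    exact hu₀min hvK


variable {N : ℕ}

/-- measure of a finite set is the sum of atoms -/
lemma meas_fin {α : Type*} [MeasurableSpace α] [MeasurableSingletonClass α]
    (ν : Measure α) (F : Finset α) : ν ↑F = ∑ x ∈ F, ν {x} := by
  classical
  rw [← setLIntegral_one, lintegral_finset]
  simp

/-- a measure vanishing outside a finite set is a sum of atoms -/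
lemma meas_eq_sum {α : Type*} [MeasurableSpace α] [MeasurableSingletonClass α]
    (ν : Measure α) (T : Finset α) (hT : ν (↑T : Set α)ᶜ = 0) (A : Set α)
    [DecidablePred (· ∈ A)] :
    ν A = ∑ x ∈ T.filter (· ∈ A), ν {x} := by
  have hTm : MeasurableSet (↑T : Set α) := T.finite_toSet.measurableSet
  have h1 : ν A = ν (A ∩ ↑T) := by
    have := measure_inter_add_diff (μ := ν) A hTm
    have h2 : ν (A \ ↑T) = 0 := measure_mono_null (fun x hx => hx.2) hT
    rw [h2, add_zero] at this
    exact this.symm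
  have h3 : A ∩ ↑T = ↑(T.filter (· ∈ A)) := by
    ext x; simp [Finset.mem_filter, and_comm]
  rw [h1, h3, meas_fin]

section Plan

variable (μ : Fin N → Measure ℝ) (s : Fin N → Finset ℝ)

/-- any plan vanishes outside the product of the supports -/
lemma plan_null_compl (hs : ∀ i, μ i ((s i : Set ℝ)ᶜ) = 0)
    (π : Measure (Fin N → ℝ)) (hπ : ∀ i, π.map (fun x => x i) = μ i) :
    π (↑(Fintype.piFinset s) : Set (Fin N → ℝ))ᶜ = 0 := by
  have hsub : (↑(Fintype.piFinset s) : Set (Fin N → ℝ))ᶜ ⊆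
      ⋃ i, (fun x : Fin N → ℝ => x i) ⁻¹' (↑(s i) : Set ℝ)ᶜ := by
    intro x hx
    simp only [Set.mem_compl_iff, Finset.mem_coe, Fintype.mem_piFinset, not_forall] at hx
    obtain ⟨i, hi⟩ := hx
    exact Set.mem_iUnion.2 ⟨i, hi⟩
  refine measure_mono_null hsub (measure_iUnion_null fun i => ?_)
  rw [← Measure.map_apply (measurable_pi_apply i) (s i).finite_toSet.measurableSet.compl,
    hπ i]
  exact hs i

lemma plan_marg_eq (hs : ∀ i, μ i ((s i : Set ℝ)ᶜ) = 0)
    (π : Measure (Fin N → ℝ)) [IsFiniteMeasure π] (hπ : ∀ i, π.map (fun x => x i) = μ i)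
    (i : Fin N) (a : ℝ) :
    marg (Fintype.piFinset s) (fun x => (π {x}).toReal) i a = (μ i {a}).toReal := by
  classical
  have h1 : μ i {a} = π ((fun x : Fin N → ℝ => x i) ⁻¹' {a}) := by
    rw [← hπ i, Measure.map_apply (measurable_pi_apply i) (measurableSet_singleton a)]
  have h2 := meas_eq_sum π (Fintype.piFinset s)
    (plan_null_compl μ s hs π hπ) ((fun x : Fin N → ℝ => x i) ⁻¹' {a})
  rw [h1, h2]
  unfold marg
  rw [ENNReal.toReal_sum (fun x _ => measure_ne_top π {x}), Finset.sum_filter]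
  refine Finset.sum_congr rfl fun x _ => ?_
  by_cases h : x i = a <;> simp [h, Set.mem_preimage]

end Plan

variable {N : ℕ}

lemma integrand_eq {l : Fin N → ℝ} (hl : ∀ i, 0 < l i) (x : Fin N → ℝ) :
    (∑ s : Fin N, ∑ t : Fin N,
      (if s < t then ENNReal.ofReal (l s * l t * |x s - x t| ^ 2) else 0))
      = ENNReal.ofReal (cfun l x) := by
  unfold cfun
  rw [ENNReal.ofReal_sum_of_nonneg (fun s _ => Finset.sum_nonneg fun t _ => by
    split_ifs with h
    · have := hl s; have := hl t; positivity
    · exact le_rfl)]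
  refine Finset.sum_congr rfl fun u _ => ?_
  rw [ENNReal.ofReal_sum_of_nonneg (fun t _ => by
    split_ifs with h
    · have := hl u; have := hl t; positivity
    · exact le_rfl)]
  refine Finset.sum_congr rfl fun t _ => ?_
  split_ifs with h
  · rfl
  · exact ENNReal.ofReal_zero.symm

lemma MOTR_eq {l : Fin N → ℝ} (hl : ∀ i, 0 < l i) (T : Finset (Fin N → ℝ))
    (π : Measure (Fin N → ℝ)) [IsFiniteMeasure π] (hT : π (↑T : Set (Fin N → ℝ))ᶜ = 0) :
    MOTR l π = ENNReal.ofReal (cost T l (fun x => (π {x}).toReal)) := by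
  unfold MOTR
  have hres : π.restrict ↑T = π := by
    refine Measure.restrict_eq_self_of_ae_mem ?_
    rw [Filter.eventually_iff, mem_ae_iff]
    simpa using hT
  calc ∫⁻ x, ∑ u : Fin N, ∑ t : Fin N,
      (if u < t then ENNReal.ofReal (l u * l t * |x u - x t| ^ 2) else 0) ∂π
      = ∫⁻ x, ENNReal.ofReal (cfun l x) ∂π := by
        exact lintegral_congr fun x => integrand_eq hl x
    _ = ∫⁻ x in ↑T, ENNReal.ofReal (cfun l x) ∂π := by rw [hres]
    _ = ∑ x ∈ T, ENNReal.ofReal (cfun l x) * π {x} := lintegral_finset T _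
    _ = ∑ x ∈ T, ENNReal.ofReal ((π {x}).toReal * cfun l x) := by
        refine Finset.sum_congr rfl fun x _ => ?_
        rw [ENNReal.ofReal_mul (ENNReal.toReal_nonneg), ENNReal.ofReal_toReal (measure_ne_top π _), mul_comm]
    _ = ENNReal.ofReal (cost T l (fun x => (π {x}).toReal)) := by
        unfold cost
        rw [ENNReal.ofReal_sum_of_nonneg (fun x _ =>
          mul_nonneg ENNReal.toReal_nonneg (cfun_nonneg hl x))]

lemma total_mass (T : Finset (Fin N → ℝ)) (π : Measure (Fin N → ℝ))
    [IsProbabilityMeasure π] (hT : π (↑T : Set (Fin N → ℝ))ᶜ = 0) :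
    ∑ x ∈ T, (π {x}).toReal = 1 := by
  classical
  have := meas_eq_sum π T hT Set.univ
  rw [measure_univ] at this
  have h2 : T.filter (· ∈ (Set.univ : Set (Fin N → ℝ))) = T := by
    refine Finset.filter_true_of_mem fun x _ => Set.mem_univ x
  rw [h2] at this
  rw [← ENNReal.toReal_sum (fun x _ => measure_ne_top π _), ← this]
  simp

/-- Building a plan from a weight function. -/
lemma mk_plan (μ : Fin N → Measure ℝ) (hprob : ∀ i, IsProbabilityMeasure (μ i))
    (s : Fin N → Finset ℝ) (hs : ∀ i, μ i ((s i : Set ℝ)ᶜ) = 0)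
    {l : Fin N → ℝ} (hl : ∀ i, 0 < l i)
    (v : (Fin N → ℝ) → ℝ) (hv0 : ∀ x ∈ Fintype.piFinset s, 0 ≤ v x)
    (hvm : ∀ i a, marg (Fintype.piFinset s) v i a = ((μ i) {a}).toReal)
    (hv1 : ∑ x ∈ Fintype.piFinset s, v x = 1) :
    ∃ π'' : Measure (Fin N → ℝ), IsProbabilityMeasure π'' ∧
      (∀ i, π''.map (fun x => x i) = μ i) ∧
      MOTR l π'' = ENNReal.ofReal (cost (Fintype.piFinset s) l v) := by
  classical
  set T := Fintype.piFinset s with hTdef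
  set π'' : Measure (Fin N → ℝ) := ∑ x ∈ T, ENNReal.ofReal (v x) • Measure.dirac x with hπ''
  have happly : ∀ A : Set (Fin N → ℝ), π'' A = ∑ x ∈ T, ENNReal.ofReal (v x) * A.indicator 1 x := by
    intro A
    rw [hπ'', Measure.finset_sum_apply]
    refine Finset.sum_congr rfl fun x _ => ?_
    rw [Measure.smul_apply, Measure.dirac_apply, smul_eq_mul]
  have hprob'' : IsProbabilityMeasure π'' := by
    constructor
    rw [happly]
    simp only [Set.indicator_univ, Pi.one_apply, mul_one]
    rw [← ENNReal.ofReal_sum_of_nonneg hv0, hv1, ENNReal.ofReal_one]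
  have hmap : ∀ i, π''.map (fun x => x i) = μ i := by
    intro i
    refine Measure.ext fun A hA => ?_
    rw [Measure.map_apply (measurable_pi_apply i) hA, happly]
    have hstep : ∀ x ∈ T, ENNReal.ofReal (v x) * ((fun y : Fin N → ℝ => y i) ⁻¹' A).indicator 1 x
        = if x i ∈ A then ENNReal.ofReal (v x) else 0 := by
      intro x _
      rw [Set.indicator_apply]
      by_cases h : x i ∈ A <;> simp [h, Set.mem_preimage]
    rw [Finset.sum_congr rfl hstep]
    -- group by fibers of x ↦ x i
    have hmaps : ∀ x ∈ T, x i ∈ s i := fun x hx => (Fintype.mem_piFinset.1 hx) i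
    rw [← Finset.sum_fiberwise_of_maps_to hmaps (fun x => if x i ∈ A then ENNReal.ofReal (v x) else 0)]
    have hinner : ∀ a ∈ s i, (∑ x ∈ T.filter (fun x => x i = a), if x i ∈ A then ENNReal.ofReal (v x) else 0)
        = if a ∈ A then μ i {a} else 0 := by
      intro a _
      by_cases h : a ∈ A
      · rw [if_pos h]
        have : ∀ x ∈ T.filter (fun x => x i = a), (if x i ∈ A then ENNReal.ofReal (v x) else 0)
            = ENNReal.ofReal (v x) := by
          intro x hx
          have := (Finset.mem_filter.1 hx).2
          rw [this, if_pos h]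
        rw [Finset.sum_congr rfl this]
        have : ∑ x ∈ T.filter (fun x => x i = a), ENNReal.ofReal (v x)
            = ENNReal.ofReal (marg T v i a) := by
          unfold marg
          rw [Finset.sum_filter]
          rw [ENNReal.ofReal_sum_of_nonneg (fun x hx => by
            split_ifs with h'
            · exact hv0 x hx
            · exact le_rfl)]
          refine Finset.sum_congr rfl fun x hx => ?_
          split_ifs with h' <;> simp
        rw [this, hvm i a, ENNReal.ofReal_toReal (measure_ne_top (μ i) _)]
      · rw [if_neg h]
        refine Finset.sum_eq_zero fun x hx => ?_
        have := (Finset.mem_filter.1 hx).2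
        rw [this, if_neg h]
    rw [Finset.sum_congr rfl hinner]
    rw [← Finset.sum_filter]
    have := meas_eq_sum (μ i) (s i) (hs i) A
    rw [this]
  refine ⟨π'', hprob'', hmap, ?_⟩
  unfold MOTR
  rw [hπ'', lintegral_finset_sum_measure]
  have : ∀ x ∈ T, ∫⁻ y, (∑ u : Fin N, ∑ t : Fin N,
      (if u < t then ENNReal.ofReal (l u * l t * |y u - y t| ^ 2) else 0))
        ∂(ENNReal.ofReal (v x) • Measure.dirac x)
      = ENNReal.ofReal (v x * cfun l x) := by
    intro x hx
    rw [lintegral_smul_measure, lintegral_dirac, integrand_eq hl, smul_eq_mul,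
      ← ENNReal.ofReal_mul (hv0 x hx)]
  rw [Finset.sum_congr rfl this]
  unfold cost
  rw [ENNReal.ofReal_sum_of_nonneg (fun x hx => mul_nonneg (hv0 x hx) (cfun_nonneg hl x))]


end Stmt18Aux

open Stmt18Aux in
/-- For `d = 1`, a plan `π ∈ Π(μ¹,…,μ^N)` has the sorting property if and
only if it is an optimal MOT plan. -/
theorem stmt18 {N : ℕ} (μ : Fin N → Measure ℝ)
    (hμ : ∀ i, IsProbabilityMeasure (μ i) ∧ FinitelySupportedR (μ i))
    (l : Fin N → ℝ) (hl : (∀ i, 0 < l i) ∧ ∑ i, l i = 1)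
    (π : Measure (Fin N → ℝ)) (hπ : IsPlanR μ π) :
    SortingProperty π ↔ ∀ π', IsPlanR μ π' → MOTR l π ≤ MOTR l π' := by
  classical
  obtain ⟨hlpos, hlsum⟩ := hl
  have hN : 0 < N := by
    rcases Nat.eq_zero_or_pos N with h0 | h
    · exfalso; subst h0; simp at hlsum
    · exact h
  set s : Fin N → Finset ℝ := fun i => (hμ i).2.choose with hsdef
  have hs : ∀ i, μ i ((s i : Set ℝ)ᶜ) = 0 := fun i => (hμ i).2.choose_spec
  have hprob : ∀ i, IsProbabilityMeasure (μ i) := fun i => (hμ i).1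
  set T : Finset (Fin N → ℝ) := Fintype.piFinset s with hTdef
  have hTlat : ∀ x ∈ T, ∀ y ∈ T, x ⊓ y ∈ T ∧ x ⊔ y ∈ T := by
    intro x hx y hy
    have hxi := Fintype.mem_piFinset.1 hx
    have hyi := Fintype.mem_piFinset.1 hy
    constructor <;> rw [hTdef, Fintype.mem_piFinset] <;> intro i
    · have : (x ⊓ y) i = min (x i) (y i) := rfl
      rw [this]
      rcases le_total (x i) (y i) with h | h
      · rw [min_eq_left h]; exact hxi i
      · rw [min_eq_right h]; exact hyi i
    · have : (x ⊔ y) i = max (x i) (y i) := rfl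
      rw [this]
      rcases le_total (x i) (y i) with h | h
      · rw [max_eq_right h]; exact hyi i
      · rw [max_eq_left h]; exact hxi i
  haveI hπP : IsProbabilityMeasure π := hπ.1
  have hTc : π (↑T : Set (Fin N → ℝ))ᶜ = 0 := plan_null_compl μ s hs π hπ.2
  set w : (Fin N → ℝ) → ℝ := fun x => (π {x}).toReal with hwdef
  have hw0 : ∀ x ∈ T, 0 ≤ w x := fun x _ => ENNReal.toReal_nonneg
  have hwm : ∀ i a, marg T w i a = ((μ i) {a}).toReal := plan_marg_eq μ s hs π hπ.2
  have hm1 : ∀ i a, ((μ i) {a}).toReal ≤ 1 := by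
    intro i a
    haveI := hprob i
    have h := prob_le_one (μ := μ i) (s := {a})
    have := ENNReal.toReal_mono ENNReal.one_ne_top h
    simpa using this
  have hsupp : ∀ z : Fin N → ℝ, π {z} ≠ 0 → z ∈ T := by
    intro z hz
    by_contra hzT
    refine hz (measure_mono_null ?_ hTc)
    intro u hu
    rw [Set.mem_singleton_iff] at hu
    subst hu
    exact fun hmem => hzT (by simpa using hmem)
  have hw_ne : ∀ z : Fin N → ℝ, w z ≠ 0 → π {z} ≠ 0 := by
    intro z hz h0
    exact hz (by rw [hwdef]; simp [h0])
  constructor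
  · -- sorting ⇒ optimal
    intro hsort π' hπ'
    haveI hπ'P : IsProbabilityMeasure π' := hπ'.1
    have hT'c : π' (↑T : Set (Fin N → ℝ))ᶜ = 0 := plan_null_compl μ s hs π' hπ'.2
    set w' : (Fin N → ℝ) → ℝ := fun x => (π' {x}).toReal with hw'def
    have hw'0 : ∀ x ∈ T, 0 ≤ w' x := fun x _ => ENNReal.toReal_nonneg
    have hw'm : ∀ i a, marg T w' i a = ((μ i) {a}).toReal := plan_marg_eq μ s hs π' hπ'.2
    have hws : SortedOn T w := by
      intro a ha b hb hwa hwb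
      exact hsort a (hw_ne a hwa) b (hw_ne b hwb)
    obtain ⟨w₀, hw₀0, hw₀m, hw₀min⟩ :=
      exists_min hN T l (fun i a => ((μ i) {a}).toReal) hm1 w hw0 hwm
    have hw₀s : SortedOn T w₀ := by
      refine min_sorted hlpos T hTlat w₀ hw₀0 fun v hv0 hvm => ?_
      exact hw₀min v hv0 fun i a => (hvm i a).trans (hw₀m i a)
    have huniq := sorted_unique hN T (T.filter fun z => w z ≠ 0).card w w₀ hw0 hw₀0 hws hw₀s
      (fun i a => (hwm i a).trans (hw₀m i a).symm) le_rfl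
    have hcosteq : cost T l w = cost T l w₀ :=
      Finset.sum_congr rfl fun x hx => by rw [huniq x hx]
    have hle : cost T l w ≤ cost T l w' := by
      rw [hcosteq]; exact hw₀min w' hw'0 hw'm
    rw [MOTR_eq hlpos T π hTc, MOTR_eq hlpos T π' hT'c]
    exact ENNReal.ofReal_le_ofReal hle
  · -- optimal ⇒ sorting
    intro hopt x hxs y hys
    by_contra hcon
    have hxT : x ∈ T := hsupp x hxs
    have hyT : y ∈ T := hsupp y hys
    have hwx : w x ≠ 0 := by
      rw [hwdef]
      simp only [ne_eq, ENNReal.toReal_eq_zero_iff, not_or]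
      exact ⟨hxs, measure_ne_top π _⟩
    have hwy : w y ≠ 0 := by
      rw [hwdef]
      simp only [ne_eq, ENNReal.toReal_eq_zero_iff, not_or]
      exact ⟨hys, measure_ne_top π _⟩
    obtain ⟨v, hv0, hvm, hvsum, hvcost⟩ :=
      swap_improve hlpos T hTlat w hw0 hxT hyT hwx hwy hcon
    have hv1 : ∑ z ∈ T, v z = 1 := hvsum.trans (total_mass T π hTc)
    have hvm' : ∀ i a, marg T v i a = ((μ i) {a}).toReal := fun i a =>
      (hvm i a).trans (hwm i a)
    obtain ⟨π'', hp'', hmap'', hMOTR''⟩ := mk_plan μ hprob s hs hlpos v hv0 hvm' hv1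
    have hle := hopt π'' ⟨hp'', hmap''⟩
    rw [MOTR_eq hlpos T π hTc, hMOTR''] at hle
    have h0v : 0 ≤ cost T l v :=
      Finset.sum_nonneg fun z hz => mul_nonneg (hv0 z hz) (cfun_nonneg hlpos z)
    have hlt : ENNReal.ofReal (cost T l v) < ENNReal.ofReal (cost T l w) :=
      (ENNReal.ofReal_lt_ofReal_iff (lt_of_le_of_lt h0v hvcost)).2 hvcost
    exact absurd hle (not_le.2 hlt)
end
end
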